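/- arXiv:1711.00904 — 7 statements merged into one kernel-verified Lean document; each statement's English description precedes it below -/
import Mathlib

section
/- Let c ∈ K be nonzero, char K ≠ 2, and define H : K⁴ → K⁴ by H = (x₁x₃ + c x₂x₄, x₂x₃ − x₁x₄, ½x₃² + (c/2)x₄², ½x₁² + (c/2)x₂²). Then the Jacobian matrix J H has determinant zero, and moreover rank(J H) ≤ 3 over the function field K(x₁,x₂,x₃,x₄). -/
open MvPolynomial Matrix

lemma aux_rank_ne {F : Type*} [Field F] {n : Type*} [Fintype n] [DecidableEq n]
    (A : Matrix n n F) (h : A.det = 0) : A.rank ≠ Fintype.card n := by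
  intro heq
  have htop : LinearMap.range A.mulVecLin = ⊤ := by
    apply Submodule.eq_top_of_finrank_eq
    rw [Matrix.rank] at heq
    simp [heq, Module.finrank_pi]
  have hsurj : Function.Surjective A.mulVec := by
    intro y
    have : y ∈ LinearMap.range A.mulVecLin := htop ▸ Submodule.mem_top
    obtain ⟨x, hx⟩ := this
    exact ⟨x, hx⟩
  have hu : IsUnit A := (Matrix.mulVec_surjective_iff_isUnit).mp hsurj
  have := (Matrix.isUnit_iff_isUnit_det A).mp hu
  rw [h] at this
  exact not_isUnit_zero this

set_option maxHeartbeats 1000000 in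
theorem det_zero_rank_le_three {K : Type*} [Field K] (h2 : ringChar K ≠ 2)
    (c : K) (hc : c ≠ 0) :
    let H : Fin 4 → MvPolynomial (Fin 4) K :=
      ![X 0 * X 2 + C c * (X 1 * X 3),
        X 1 * X 2 - X 0 * X 3,
        C (2⁻¹ : K) * X 2 ^ 2 + C (c / 2) * X 3 ^ 2,
        C (2⁻¹ : K) * X 0 ^ 2 + C (c / 2) * X 1 ^ 2]
    let M : Matrix (Fin 4) (Fin 4) (MvPolynomial (Fin 4) K) :=
      Matrix.of fun i j => pderiv j (H i)
    M.det = 0 ∧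
      (M.map (algebraMap (MvPolynomial (Fin 4) K)
        (FractionRing (MvPolynomial (Fin 4) K)))).rank ≤ 3 := by
  intro H M
  have h2' : (2 : K) ≠ 0 := Ring.two_ne_zero h2
  have hM : M = !![X 2, C c * X 3, X 0, C c * X 1;
                   -X 3, X 2, X 1, -X 0;
                   0, 0, X 2, C c * X 3;
                   X 0, C c * X 1, 0, 0] := by
    refine Matrix.ext fun i j => ?_
    fin_cases i <;> fin_cases j <;>
      (simp [M, H, map_add, map_sub, pderiv_C_mul, pderiv_mul, pderiv_pow, pderiv_X,
        pderiv_C, Pi.single_apply, show ((2:MvPolynomial (Fin 4) K)) = C 2 from rfl,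
        ← mul_assoc, ← C_mul, inv_mul_cancel₀ h2', div_mul_cancel₀ _ h2']
       try ring)
  have hdet : M.det = 0 := by
    rw [hM]
    simp [Matrix.det_succ_row_zero, Fin.sum_univ_succ, Fin.succAbove, show (Fin.castSucc 2 : Fin 4) = 2 from rfl]
    ring
  refine ⟨hdet, ?_⟩
  have hdet2 : (M.map (algebraMap (MvPolynomial (Fin 4) K)
      (FractionRing (MvPolynomial (Fin 4) K)))).det = 0 := by
    have h := (algebraMap (MvPolynomial (Fin 4) K)
      (FractionRing (MvPolynomial (Fin 4) K))).map_det M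
    rw [hdet, map_zero, RingHom.mapMatrix_apply] at h
    exact h.symm
  have h4 := (M.map (algebraMap (MvPolynomial (Fin 4) K)
      (FractionRing (MvPolynomial (Fin 4) K)))).rank_le_card_width
  have hne := aux_rank_ne _ hdet2
  simp only [Fintype.card_fin] at h4 hne
  omega
end

section
/- Let R be an integral domain of characteristic zero with fraction field K, and let F, F̃ ∈ R[x₁,…,xₙ]ⁿ be polynomial maps such that F is invertible over R (i.e. has a polynomial inverse with coefficients in R), F̃ᵢ = Fᵢ for all i ≠ n, and det J F̃ = det J F. Then F̃ₙ − Fₙ ∈ R[F₁,…,F_{n−1}], so F̃ ∘ F⁻¹ is an elementary polynomial map over R; in particular F̃ is invertible over R. -/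
open MvPolynomial Matrix

private lemma coeff_pderiv_aux {R σ : Type*} [CommRing R] [DecidableEq σ]
    (j : σ) (p : MvPolynomial σ R) (m : σ →₀ ℕ) :
    (pderiv j p).coeff m = ((m j + 1 : ℕ) : R) * p.coeff (m + Finsupp.single j 1) := by
  induction p using MvPolynomial.induction_on' with
  | add p q hp hq => simp [hp, hq, mul_add]
  | monomial s a =>
    rw [pderiv_monomial, coeff_monomial, coeff_monomial]
    split_ifs with h1 h2 h2
    · subst h2
      simp [mul_comm]
    · rcases Nat.eq_zero_or_pos (s j) with h0 | h0
      · simp [h0]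
      · exfalso
        apply h2
        subst h1
        rw [tsub_add_cancel_of_le]
        exact Finsupp.single_le_iff.mpr h0
    · exfalso
      apply h1
      subst h2
      simp
    · simp

private lemma not_mem_vars_of_pderiv_eq_zero {R σ : Type*} [CommRing R] [IsDomain R]
    [CharZero R] [DecidableEq σ] {j : σ} {p : MvPolynomial σ R} (h : pderiv j p = 0) : j ∉ p.vars := by
  intro hv
  obtain ⟨m, hm, hjm⟩ := (MvPolynomial.mem_vars j).mp hv
  have hmj : m j ≠ 0 := Finsupp.mem_support_iff.mp hjm
  have key := coeff_pderiv_aux j p (m - Finsupp.single j 1)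
  rw [h, MvPolynomial.coeff_zero] at key
  have hsub : (m - Finsupp.single j 1) + Finsupp.single j 1 = m :=
    tsub_add_cancel_of_le (Finsupp.single_le_iff.mpr (Nat.one_le_iff_ne_zero.mpr hmj))
  rw [hsub] at key
  have : p.coeff m = 0 := by
    rcases mul_eq_zero.mp key.symm with h' | h'
    · exact absurd h' (Nat.cast_ne_zero.mpr (Nat.succ_ne_zero _))
    · exact h'
  exact Finsupp.mem_support_iff.mp hm this

private lemma pderiv_bind₁_aux {R σ : Type*} [CommRing R] [Fintype σ] [DecidableEq σ]
    (F : σ → MvPolynomial σ R) (j : σ) (p : MvPolynomial σ R) :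
    pderiv j (bind₁ F p) = ∑ i, bind₁ F (pderiv i p) * pderiv j (F i) := by
  induction p using MvPolynomial.induction_on with
  | C a => simp
  | add p q hp hq =>
    simp only [map_add, hp, hq, add_mul, Finset.sum_add_distrib]
  | mul_X p i hp =>
    rw [_root_.map_mul, bind₁_X_right, pderiv_mul, hp]
    have : ∀ k, bind₁ F (pderiv k (p * X i)) * pderiv j (F k)
        = bind₁ F (pderiv k p) * pderiv j (F k) * F i
          + (if k = i then bind₁ F p * pderiv j (F i) else 0) := by
      intro k
      rw [pderiv_mul]
      rcases eq_or_ne k i with rfl | hk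
      · simp [pderiv_X_self]; ring
      · rw [pderiv_X_of_ne (Ne.symm hk)]
        simp [hk]; ring
    rw [Finset.sum_congr rfl fun k _ => this k, Finset.sum_add_distrib, ← Finset.sum_mul,
      Finset.sum_ite_eq' Finset.univ i (fun _ => bind₁ F p * pderiv j (F i))]
    simp [mul_comm]

private lemma bind₁_congr_supported {R σ τ : Type*} [CommRing R]
    {f g : σ → MvPolynomial τ R} {s : Set σ} {p : MvPolynomial σ R}
    (hp : p ∈ MvPolynomial.supported R s) (h : ∀ i ∈ s, f i = g i) :
    bind₁ f p = bind₁ g p := by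
  rw [MvPolynomial.supported_eq_adjoin_X] at hp
  induction hp using Algebra.adjoin_induction with
  | mem x hx =>
    obtain ⟨i, hi, rfl⟩ := hx
    simp [bind₁_X_right, h i hi]
  | algebraMap r => simp
  | add x y hx hy ihx ihy => simp [ihx, ihy]
  | mul x y hx hy ihx ihy => simp [ihx, ihy]

private lemma bind_mem_adjoin_aux {R σ τ : Type*} [CommRing R]
    (F : σ → MvPolynomial τ R) {s : Set σ} {p : MvPolynomial σ R}
    (hp : p ∈ MvPolynomial.supported R s) :
    bind₁ F p ∈ Algebra.adjoin R (F '' s) := by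
  rw [MvPolynomial.supported_eq_adjoin_X] at hp
  induction hp using Algebra.adjoin_induction with
  | mem x hx =>
    obtain ⟨i, hi, rfl⟩ := hx
    rw [bind₁_X_right]
    exact Algebra.subset_adjoin ⟨i, hi, rfl⟩
  | algebraMap r =>
    simp only [AlgHom.commutes]
    exact Subalgebra.algebraMap_mem _ r
  | add x y hx hy ihx ihy => rw [map_add]; exact add_mem ihx ihy
  | mul x y hx hy ihx ihy => rw [_root_.map_mul]; exact mul_mem ihx ihy

theorem elementary_of_equal_jacobian_det {R : Type*} [CommRing R] [IsDomain R] [CharZero R]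
    {n : ℕ} (F Ft G : Fin (n + 1) → MvPolynomial (Fin (n + 1)) R)
    (hFG : ∀ i, bind₁ G (F i) = X i) (hGF : ∀ i, bind₁ F (G i) = X i)
    (heq : ∀ i, i ≠ Fin.last n → Ft i = F i)
    (hdet : (Matrix.of fun i j => pderiv j (Ft i)).det
      = (Matrix.of fun i j => pderiv j (F i)).det) :
    (Ft (Fin.last n) - F (Fin.last n))
        ∈ Algebra.adjoin R (Set.range fun i : Fin n => F i.castSucc) ∧
      ∃ Gt : Fin (n + 1) → MvPolynomial (Fin (n + 1)) R,
        (∀ i, bind₁ Gt (Ft i) = X i) ∧ (∀ i, bind₁ Ft (Gt i) = X i) := by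
  classical
  -- composition identities
  have hGFcomp : ∀ p : MvPolynomial (Fin (n + 1)) R, bind₁ G (bind₁ F p) = p := by
    intro p
    rw [bind₁_bind₁]
    simp [hFG]
  have hFGcomp : ∀ p : MvPolynomial (Fin (n + 1)) R, bind₁ F (bind₁ G p) = p := by
    intro p
    rw [bind₁_bind₁]
    simp [hGF]
  set A : Matrix (Fin (n + 1)) (Fin (n + 1)) (MvPolynomial (Fin (n + 1)) R) :=
    Matrix.of fun i j => pderiv j (F i) with hA
  -- det A is a unit
  have hBA : (Matrix.of fun i k => bind₁ F (pderiv k (G i))) * A = 1 := by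
    ext i j
    rw [Matrix.mul_apply]
    have : ∑ k, (Matrix.of fun i k => bind₁ F (pderiv k (G i))) i k * A k j
        = pderiv j (bind₁ F (G i)) := (pderiv_bind₁_aux F j (G i)).symm
    rw [this, hGF i, Matrix.one_apply]
    simp [Pi.single_apply, eq_comm]
  have hdetA : IsUnit A.det := by
    apply IsUnit.of_mul_eq_one (a := A.det) (Matrix.of fun i k => bind₁ F (pderiv k (G i))).det
    rw [mul_comm, ← Matrix.det_mul, hBA, Matrix.det_one]
  set D : MvPolynomial (Fin (n + 1)) R := Ft (Fin.last n) - F (Fin.last n) with hDdef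
  set E : MvPolynomial (Fin (n + 1)) R := bind₁ G D with hEdef
  have hD : bind₁ F E = D := hFGcomp D
  set c : Fin (n + 1) → MvPolynomial (Fin (n + 1)) R := fun k => bind₁ F (pderiv k E) with hc
  have hrow : ∀ j, pderiv j D = ∑ k, c k * pderiv j (F k) := by
    intro j
    conv_lhs => rw [← hD]
    exact pderiv_bind₁_aux F j E
  have hM : (Matrix.of fun i j => pderiv j (Ft i))
      = A.updateRow (Fin.last n) (A (Fin.last n) + ∑ k, c k • A k) := by
    ext i j
    rcases eq_or_ne i (Fin.last n) with rfl | hi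
    · rw [Matrix.updateRow_self]
      have hFt : Ft (Fin.last n) = F (Fin.last n) + D := by rw [hDdef]; ring
      simp only [Matrix.of_apply, hFt, map_add, Pi.add_apply, Finset.sum_apply, Pi.smul_apply,
        smul_eq_mul, hrow j, hA]
    · rw [Matrix.updateRow_ne hi]
      simp [hA, heq i hi]
  rw [hM, Matrix.det_updateRow_add, Matrix.updateRow_eq_self, Matrix.det_updateRow_sum] at hdet
  have hclast : c (Fin.last n) = 0 := by
    rw [smul_eq_mul, add_eq_left] at hdet
    rcases mul_eq_zero.mp hdet with h | h
    · exact h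
    · exact absurd h hdetA.ne_zero
  have hpE : pderiv (Fin.last n) E = 0 := by
    have : bind₁ F (pderiv (Fin.last n) E) = bind₁ F 0 := by
      rw [map_zero]; exact hclast
    have := congrArg (bind₁ G) this
    rwa [hGFcomp, map_zero] at this
  have hsupp : E ∈ MvPolynomial.supported R (Set.range (Fin.castSucc : Fin n → Fin (n + 1))) := by
    rw [MvPolynomial.mem_supported]
    intro i hi
    rcases eq_or_ne i (Fin.last n) with rfl | hne
    · exact absurd hi (not_mem_vars_of_pderiv_eq_zero hpE)
    · obtain ⟨j, hj⟩ := Fin.exists_castSucc_eq.mpr hne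
      exact ⟨j, hj⟩
  constructor
  · -- first goal
    have hmem := bind_mem_adjoin_aux F hsupp
    rw [hD] at hmem
    have himg : F '' Set.range (Fin.castSucc : Fin n → Fin (n + 1))
        = Set.range fun i : Fin n => F i.castSucc := by
      rw [← Set.range_comp]; rfl
    rwa [himg] at hmem
  · -- second goal: explicit inverse
    let e : Fin (n + 1) → MvPolynomial (Fin (n + 1)) R :=
      fun i => if i = Fin.last n then X i - E else X i
    have elast : e (Fin.last n) = X (Fin.last n) - E := if_pos rfl
    have ene : ∀ k, k ≠ Fin.last n → e k = X k := fun k hk => if_neg hk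
    refine ⟨fun i => bind₁ e (G i), ?_, ?_⟩
    · -- bind₁ Gt (Ft i) = X i
      have key : ∀ i, bind₁ (fun k => bind₁ e (G k)) (F i) = e i := by
        intro i
        rw [← bind₁_bind₁, hFG i, bind₁_X_right]
      have hEe : bind₁ e E = E := by
        have := bind₁_congr_supported (g := X) hsupp (fun i hi => by
          obtain ⟨j, rfl⟩ := hi
          exact ene _ (Fin.castSucc_lt_last j).ne)
        rw [this, bind₁_X_left, AlgHom.id_apply]
      intro i
      rcases eq_or_ne i (Fin.last n) with rfl | hi
      · have hFt : Ft (Fin.last n) = F (Fin.last n) + bind₁ F E := by rw [hD, hDdef]; ring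
        rw [hFt, map_add, key, bind₁_bind₁]
        have : bind₁ (fun k => bind₁ (fun k => bind₁ e (G k)) (F k)) E = E := by
          rw [show (fun k => bind₁ (fun k => bind₁ e (G k)) (F k)) = e from funext key]
          exact hEe
        rw [this, elast]
        ring
      · rw [heq i hi, key, ene i hi]
    · -- bind₁ Ft (Gt i) = X i
      have hEFt : bind₁ Ft E = bind₁ F E := by
        apply bind₁_congr_supported hsupp
        intro i hi
        obtain ⟨j, rfl⟩ := hi
        exact heq _ (Fin.castSucc_lt_last j).ne
      have key2 : ∀ k, bind₁ Ft (e k) = F k := by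
        intro k
        rcases eq_or_ne k (Fin.last n) with rfl | hk
        · rw [elast, map_sub, bind₁_X_right, hEFt, hD, hDdef]
          ring
        · rw [ene k hk, bind₁_X_right, heq k hk]
      intro i
      show bind₁ Ft (bind₁ e (G i)) = X i
      rw [bind₁_bind₁, show (fun k => bind₁ Ft (e k)) = F from funext key2]
      exact hGF i
end

section
/- Let K ⊆ L be fields, H ∈ K[x₁,…,xₙ]ⁿ a polynomial map, s ≥ 1, and T ∈ GL_n(L) such that for H̃ := T⁻¹H(Tx), the ideal of L[x] generated by the entries of (J H̃)^s contains a power of a polynomial f. Suppose either #K ≥ deg f + 1, or f is homogeneous and #K ≥ deg f. Then there exists v ∈ Kⁿ with ((J H)|_{x=v})^s ≠ 0. -/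
open MvPolynomial Matrix


open Cardinal in
lemma sz_exists {K : Type*} [Field K] : ∀ {n : ℕ} (g : MvPolynomial (Fin n) K), g ≠ 0 →
    (g.totalDegree : Cardinal) < Cardinal.mk K → ∃ v : Fin n → K, eval v g ≠ 0 := by
  intro n
  induction n with
  | zero =>
    intro g hg _
    refine ⟨0, ?_⟩
    rw [eq_C_of_isEmpty g] at hg ⊢
    simpa using fun h => hg (by rw [h, map_zero])
  | succ n IH =>
    intro g hg hcard
    set q := finSuccEquiv K n g with hq
    have hq0 : q ≠ 0 := fun h => hg ((map_eq_zero_iff _ (finSuccEquiv K n).injective).mp h)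
    have hlc : q.coeff q.natDegree ≠ 0 := Polynomial.leadingCoeff_ne_zero.mpr hq0
    have hdeg1 : (q.coeff q.natDegree).totalDegree ≤ g.totalDegree := by
      have h := totalDegree_coeff_finSuccEquiv_add_le g q.natDegree hlc
      rw [← hq] at h
      omega
    obtain ⟨r, hr⟩ := IH (q.coeff q.natDegree) hlc
      (lt_of_le_of_lt (by exact_mod_cast Nat.cast_le.mpr hdeg1) hcard)
    set φ : Polynomial K := q.map (eval r) with hφ
    have hφ0 : φ ≠ 0 := fun h => hr <| by
      rw [← Polynomial.coeff_map, ← hφ, h, Polynomial.coeff_zero]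
    have hφdeg : (φ.natDegree : Cardinal) < Cardinal.mk K := by
      refine lt_of_le_of_lt ?_ hcard
      have h1 : φ.natDegree ≤ q.natDegree := Polynomial.natDegree_map_le
      have h2 : q.natDegree ≤ g.totalDegree := by
        rw [hq, natDegree_finSuccEquiv]; exact degreeOf_le_totalDegree g 0
      exact_mod_cast Nat.cast_le.mpr (h1.trans h2)
    obtain ⟨y, hy⟩ := φ.exists_eval_ne_zero_of_natDegree_lt_card hφ0 hφdeg
    exact ⟨Fin.cons y r, by rwa [eval_eq_eval_mv_eval']⟩

lemma vanish_aux {K : Type*} [Field K] {n d : ℕ} (g : MvPolynomial (Fin n) K)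
    (hdeg : g.totalDegree ≤ d) (h : ∀ v : Fin n → K, eval v g = 0)
    (hcard : ((d + 1 : ℕ) : Cardinal) ≤ Cardinal.mk K ∨
      (g.IsHomogeneous d ∧ ((d : ℕ) : Cardinal) ≤ Cardinal.mk K)) : g = 0 := by
  rcases hcard with hc | ⟨hhom, hc⟩
  · by_contra hg
    obtain ⟨v, hv⟩ := sz_exists g hg (lt_of_lt_of_le
      (by exact_mod_cast Nat.lt_succ_of_le hdeg) hc)
    exact hv (h v)
  · exact hhom.eq_zero_of_forall_eval_eq_zero_of_le_card h hc

open Cardinal in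
lemma eq_zero_of_eval_subfield {K L : Type*} [Field K] [Field L] [Algebra K L] {n d : ℕ}
    (f : MvPolynomial (Fin n) L) (hdeg : f.totalDegree ≤ d)
    (h : ∀ v : Fin n → K, eval (fun i => algebraMap K L (v i)) f = 0)
    (hcard : ((d + 1 : ℕ) : Cardinal) ≤ Cardinal.mk K ∨
      (f.IsHomogeneous d ∧ ((d : ℕ) : Cardinal) ≤ Cardinal.mk K)) : f = 0 := by
  classical
  set B := Module.Basis.ofVectorSpace K L with hB
  set fK : Module.Basis.ofVectorSpaceIndex K L → MvPolynomial (Fin n) K := fun t =>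
    f.support.sum (fun m => monomial m (B.repr (coeff m f) t)) with hfK
  have hcoeff : ∀ t m, coeff m (fK t) = B.repr (coeff m f) t := by
    intro t m
    rw [hfK]
    simp only [coeff_sum, coeff_monomial]
    rw [Finset.sum_ite_eq' f.support m (fun m' => B.repr (coeff m' f) t)]
    split_ifs with hm
    · rfl
    · rw [notMem_support_iff.mp hm, map_zero, Finsupp.zero_apply]
  have heval : ∀ t (v : Fin n → K),
      eval v (fK t) = B.repr (eval (fun i => algebraMap K L (v i)) f) t := by
    intro t v
    have hrhs : eval (fun i => algebraMap K L (v i)) f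
        = ∑ m ∈ f.support, (∏ i ∈ m.support, v i ^ m i) • coeff m f := by
      rw [eval_eq]
      refine Finset.sum_congr rfl fun m _ => ?_
      rw [Algebra.smul_def, mul_comm]
      congr 1
      rw [map_prod]
      exact Finset.prod_congr rfl fun i _ => (map_pow _ _ _).symm
    have hlhs : eval v (fK t)
        = ∑ m ∈ f.support, (B.repr (coeff m f)) t * ∏ i ∈ m.support, v i ^ m i := by
      simp only [hfK]
      rw [map_sum]
      exact Finset.sum_congr rfl fun m _ => by rw [eval_monomial]; rfl
    have hr2 : (B.repr (∑ m ∈ f.support, (∏ i ∈ m.support, v i ^ m i) • coeff m f)) t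
        = ∑ m ∈ f.support, (∏ i ∈ m.support, v i ^ m i) * (B.repr (coeff m f)) t := by
      rw [map_sum, Finsupp.finset_sum_apply]
      exact Finset.sum_congr rfl fun m _ => by
        rw [_root_.map_smul, Finsupp.smul_apply, smul_eq_mul]
    rw [hlhs, hrhs, hr2]
    exact Finset.sum_congr rfl fun m _ => mul_comm _ _
  have hK0 : ∀ t, fK t = 0 := by
    intro t
    refine vanish_aux (d := d) (fK t) ?_ (fun v => by rw [heval t v, h v, map_zero, Finsupp.zero_apply]) ?_
    · rw [totalDegree]
      refine Finset.sup_le fun m hm => ?_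
      have hne : coeff m f ≠ 0 := fun h0 => (mem_support_iff.mp hm)
        (by rw [hcoeff, h0, map_zero, Finsupp.zero_apply])
      exact le_trans (le_totalDegree (mem_support_iff.mpr hne)) hdeg
    · rcases hcard with hc | ⟨hhom, hc⟩
      · exact Or.inl hc
      · refine Or.inr ⟨?_, hc⟩
        intro m hm
        refine hhom ?_
        intro h0
        exact hm (by rw [hcoeff, h0, map_zero, Finsupp.zero_apply])
  ext m
  rw [coeff_zero]
  have : B.repr (coeff m f) = 0 := by
    ext t
    rw [← hcoeff t m, hK0 t, coeff_zero, Finsupp.zero_apply]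
  exact (LinearEquiv.map_eq_zero_iff B.repr).mp this


lemma pderiv_bind₁' {R : Type*} [CommSemiring R] {n : ℕ} (φ : Fin n → MvPolynomial (Fin n) R)
    (j : Fin n) (p : MvPolynomial (Fin n) R) :
    pderiv j (bind₁ φ p) = ∑ l, bind₁ φ (pderiv l p) * pderiv j (φ l) := by
  induction p using MvPolynomial.induction_on with
  | C a => simp
  | add p q hp hq =>
    simp only [_root_.map_add, hp, hq, add_mul, Finset.sum_add_distrib]
  | mul_X p i hp =>
    have key : ∀ l, bind₁ φ (pderiv l (p * X i)) * pderiv j (φ l)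
        = (bind₁ φ (pderiv l p) * pderiv j (φ l)) * φ i
          + (if i = l then bind₁ φ p * pderiv j (φ l) else 0) := by
      intro l
      rw [pderiv_mul]
      simp only [_root_.map_add, _root_.map_mul, bind₁_X_right, pderiv_X, Pi.single_apply,
        apply_ite (⇑(bind₁ φ)), _root_.map_one, _root_.map_zero, add_mul]
      congr 1
      · ring
      · split_ifs with hl <;> simp
    rw [_root_.map_mul, bind₁_X_right, pderiv_mul, hp]
    rw [Finset.sum_congr rfl (fun l _ => key l), Finset.sum_add_distrib,
      Finset.sum_ite_eq Finset.univ i (fun l => bind₁ φ p * pderiv j (φ l)),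
      if_pos (Finset.mem_univ i), Finset.sum_mul]


lemma totalDegree_bind₁_le {R : Type*} [CommSemiring R] {n : ℕ}
    (g : Fin n → MvPolynomial (Fin n) R) (hg : ∀ i, (g i).totalDegree ≤ 1)
    (p : MvPolynomial (Fin n) R) : (bind₁ g p).totalDegree ≤ p.totalDegree := by
  show (aeval g p).totalDegree ≤ p.totalDegree
  rw [aeval_def, eval₂_eq]
  refine (totalDegree_finset_sum _ _).trans (Finset.sup_le fun m hm => ?_)
  refine (totalDegree_mul _ _).trans ?_
  have h1 : (algebraMap R (MvPolynomial (Fin n) R) (coeff m p)).totalDegree = 0 :=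
    totalDegree_C _
  rw [h1, zero_add]
  refine (totalDegree_finset_prod _ _).trans ?_
  calc ∑ i ∈ m.support, (g i ^ m i).totalDegree
      ≤ ∑ i ∈ m.support, m i * 1 := Finset.sum_le_sum fun i _ =>
        (totalDegree_pow _ _).trans (Nat.mul_le_mul_left (m i) (hg i))
    _ = m.sum fun _ e => e := by simp [Finsupp.sum]
    _ ≤ p.totalDegree := le_totalDegree hm

lemma lin_totalDegree {R : Type*} [CommSemiring R] [Nontrivial R] {n : ℕ} (c : Fin n → R) :
    (∑ t, C (c t) * X t : MvPolynomial (Fin n) R).totalDegree ≤ 1 := by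
  refine (totalDegree_finset_sum _ _).trans (Finset.sup_le fun t _ => ?_)
  refine (totalDegree_mul _ _).trans ?_
  rw [totalDegree_C, zero_add]
  exact le_of_eq (totalDegree_X t)

lemma lin_isHomogeneous {R : Type*} [CommSemiring R] {n : ℕ} (c : Fin n → R) :
    (∑ t, C (c t) * X t : MvPolynomial (Fin n) R).IsHomogeneous 1 :=
  IsHomogeneous.sum _ _ _ fun t _ => (isHomogeneous_X _ _).C_mul _

lemma bind₁_lin {R : Type*} [CommSemiring R] {n : ℕ} (A B : Matrix (Fin n) (Fin n) R)
    (i : Fin n) :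
    bind₁ (fun l => ∑ t, C (B l t) * X t) (∑ j, C (A i j) * X j)
      = ∑ t, C ((A * B) i t) * X t := by
  rw [map_sum]
  have key : ∀ j, bind₁ (fun l => ∑ t, C (B l t) * X t) (C (A i j) * X j)
      = ∑ t, C (A i j * B j t) * X t := by
    intro j
    rw [_root_.map_mul, bind₁_C_right, bind₁_X_right, Finset.mul_sum]
    exact Finset.sum_congr rfl fun t _ => by rw [← mul_assoc, ← C_mul]
  rw [Finset.sum_congr rfl fun j _ => key j, Finset.sum_comm]
  refine Finset.sum_congr rfl fun t _ => ?_
  rw [← Finset.sum_mul, ← map_sum, Matrix.mul_apply]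

lemma lin_one {R : Type*} [CommSemiring R] {n : ℕ} (i : Fin n) :
    (∑ t, C ((1 : Matrix (Fin n) (Fin n) R) i t) * X t) = (X i : MvPolynomial (Fin n) R) := by
  rw [Finset.sum_eq_single i]
  · simp [Matrix.one_apply]
  · intro t _ ht
    simp [Matrix.one_apply, Ne.symm ht]
  · simp

lemma pderiv_lin {R : Type*} [CommSemiring R] {n : ℕ} (c : Fin n → R) (j : Fin n) :
    pderiv j (∑ t, C (c t) * X t : MvPolynomial (Fin n) R) = C (c j) := by
  rw [map_sum]
  simp only [pderiv_C_mul, pderiv_X, Pi.single_apply]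
  rw [Finset.sum_congr rfl (fun t _ => by
    rw [mul_ite, mul_one, mul_zero] : ∀ t ∈ Finset.univ,
      C (c t) * (if t = j then 1 else 0) = if t = j then C (c t) else 0)]
  rw [Finset.sum_ite_eq' Finset.univ j (fun t => C (c t)), if_pos (Finset.mem_univ j)]

theorem exists_point_power_ne_zero {K L : Type*} [Field K] [Field L] [Algebra K L]
    {n : ℕ} (H : Fin n → MvPolynomial (Fin n) K) (s : ℕ) (hs : 1 ≤ s)
    (T : Matrix (Fin n) (Fin n) L) (hT : IsUnit T)
    (f : MvPolynomial (Fin n) L) (hf : f ≠ 0)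
    (hcard : ((f.totalDegree + 1 : ℕ) : Cardinal) ≤ Cardinal.mk K ∨
      (f.IsHomogeneous f.totalDegree ∧ ((f.totalDegree : ℕ) : Cardinal) ≤ Cardinal.mk K))
    (hideal : ∃ k : ℕ, f ^ (k + 1) ∈ Ideal.span { g | ∃ i j,
      ((Matrix.of fun i j => pderiv j (∑ kk, C (T⁻¹ i kk) *
          bind₁ (fun l => ∑ t, C (T l t) * X t)
            (MvPolynomial.map (algebraMap K L) (H kk)))) ^ s) i j = g }) :
    ∃ v : Fin n → K, (Matrix.of fun i j => eval v (pderiv j (H i))) ^ s ≠ 0 := by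
  classical
  by_contra hcon
  push_neg at hcon
  obtain ⟨k, hk⟩ := hideal
  have hdetT : IsUnit T.det := (Matrix.isUnit_iff_isUnit_det T).mp hT
  set ι : K →+* L := algebraMap K L with hι
  set φ : Fin n → MvPolynomial (Fin n) L := fun l => ∑ t, C (T l t) * X t with hφ
  set ψ : Fin n → MvPolynomial (Fin n) L := fun i => ∑ j, C (T⁻¹ i j) * X j with hψ
  set JHt : Matrix (Fin n) (Fin n) (MvPolynomial (Fin n) L) :=
    Matrix.of fun i j => pderiv j (∑ kk, C (T⁻¹ i kk) *
      bind₁ φ (MvPolynomial.map ι (H kk))) with hJHt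
  -- key evaluation claim
  have key : ∀ v : Fin n → K, eval (fun i => ι (v i)) (bind₁ ψ f) = 0 := by
    intro v
    set va : Fin n → L := fun i => ι (v i) with hva
    set w : Fin n → L := T⁻¹.mulVec va with hw
    set M0 : Matrix (Fin n) (Fin n) K := Matrix.of fun i j => eval v (pderiv j (H i)) with hM0
    set N : Matrix (Fin n) (Fin n) L := M0.map ι with hN
    -- evaluation of φ at w
    have hφw : ∀ l, eval w (φ l) = va l := by
      intro l
      rw [hφ]
      simp only [map_sum, _root_.map_mul, eval_C, eval_X]
      have h1 : ∑ t, T l t * w t = (T * T⁻¹).mulVec va l := by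
        rw [← Matrix.mulVec_mulVec]
        simp [Matrix.mulVec, dotProduct, hw]
      rw [h1, Matrix.mul_nonsing_inv T hdetT, Matrix.one_mulVec]
    -- evaluation of mapped polynomials
    have hmap : ∀ (q : MvPolynomial (Fin n) K), eval va (MvPolynomial.map ι q) = ι (eval v q) := by
      intro q
      rw [eval_map]
      have := eval₂_comp_left ι (RingHom.id K) v q
      simpa [hva, Function.comp_def] using this.symm
    -- chain rule computation for entries
    have hentry : ∀ i j, eval w (JHt i j) = (T⁻¹ * N * T) i j := by
      intro i j
      rw [hJHt]
      show eval w (pderiv j (∑ kk, C (T⁻¹ i kk) * bind₁ φ (MvPolynomial.map ι (H kk))))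
        = (T⁻¹ * N * T) i j
      rw [map_sum]
      simp only [pderiv_C_mul]
      rw [map_sum]
      have step : ∀ kk, eval w (C (T⁻¹ i kk) * pderiv j (bind₁ φ (MvPolynomial.map ι (H kk))))
          = T⁻¹ i kk * ∑ l, ι (M0 kk l) * T l j := by
        intro kk
        rw [_root_.map_mul, eval_C]
        congr 1
        rw [pderiv_bind₁' φ j (MvPolynomial.map ι (H kk)), map_sum]
        refine Finset.sum_congr rfl fun l _ => ?_
        rw [_root_.map_mul]
        have h2 : eval w (bind₁ φ (pderiv l (MvPolynomial.map ι (H kk)))) = ι (M0 kk l) := by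
          have h3 : eval w (bind₁ φ (pderiv l (MvPolynomial.map ι (H kk))))
              = eval (fun t => eval w (φ t)) (pderiv l (MvPolynomial.map ι (H kk))) :=
            eval₂Hom_bind₁ _ _ _ _
          rw [h3]
          have h4 : (fun t => eval w (φ t)) = va := funext hφw
          rw [h4, pderiv_map, hmap]
          rfl
        rw [h2, hφ, pderiv_lin]
        rw [eval_C]
      rw [Finset.sum_congr rfl fun kk _ => step kk]
      simp only [Matrix.mul_apply, hN, Matrix.map_apply, Finset.sum_mul, Finset.mul_sum]
      rw [Finset.sum_comm]
      exact Finset.sum_congr rfl fun l _ => Finset.sum_congr rfl fun kk _ => by ring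
    -- matrix power evaluation
    have hmat : JHt.map (eval w) = T⁻¹ * N * T := by
      ext i j
      exact hentry i j
    have hpow : (JHt ^ s).map (eval w) = (T⁻¹ * N * T) ^ s := by
      rw [← hmat]
      have := map_pow ((eval w).mapMatrix) JHt s
      simpa [RingHom.mapMatrix_apply] using this
    have hconj : ∀ m : ℕ, (T⁻¹ * N * T) ^ m = T⁻¹ * N ^ m * T := by
      intro m
      induction m with
      | zero => rw [pow_zero, pow_zero, Matrix.mul_one, Matrix.nonsing_inv_mul T hdetT]
      | succ m ih =>
        rw [pow_succ, pow_succ, ih]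
        calc T⁻¹ * N ^ m * T * (T⁻¹ * N * T)
            = T⁻¹ * N ^ m * (T * T⁻¹) * N * T := by
              simp only [Matrix.mul_assoc]
          _ = T⁻¹ * (N ^ m * N) * T := by
              rw [Matrix.mul_nonsing_inv T hdetT, Matrix.mul_one]
              simp only [Matrix.mul_assoc]
    have hNs : N ^ s = 0 := by
      rw [hN]
      have := map_pow (ι.mapMatrix) M0 s
      simp only [RingHom.mapMatrix_apply] at this
      rw [← this, hcon v]
      simp
    have hzero : (JHt ^ s).map (eval w) = 0 := by
      rw [hpow, hconj s, hNs, Matrix.mul_zero, Matrix.zero_mul]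
    -- span argument
    have hker : Ideal.span { g | ∃ i j, (JHt ^ s) i j = g } ≤ RingHom.ker (eval w) := by
      rw [Ideal.span_le]
      rintro g ⟨i, j, rfl⟩
      rw [SetLike.mem_coe, RingHom.mem_ker]
      have := congrFun (congrFun hzero i) j
      simpa [Matrix.map_apply] using this
    have hfw : eval w (f ^ (k + 1)) = 0 := hker hk
    rw [map_pow] at hfw
    have hfw0 : eval w f = 0 := pow_eq_zero_iff (Nat.succ_ne_zero k) |>.mp hfw
    -- relate to bind₁ ψ f
    have h5 : eval va (bind₁ ψ f) = eval (fun i => eval va (ψ i)) f := eval₂Hom_bind₁ _ _ _ _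
    have h6 : (fun i => eval va (ψ i)) = w := by
      funext i
      rw [hψ]
      simp only [map_sum, _root_.map_mul, eval_C, eval_X]
      rw [hw]
      simp [Matrix.mulVec, dotProduct]
    rw [h5, h6, hfw0]
  -- conclude bind₁ ψ f = 0
  have hψdeg : ∀ i, (ψ i).totalDegree ≤ 1 := fun i => lin_totalDegree _
  have hftil : bind₁ ψ f = 0 := by
    refine eq_zero_of_eval_subfield (d := f.totalDegree) _ (totalDegree_bind₁_le ψ hψdeg f) key ?_
    rcases hcard with hc | ⟨hhom, hc⟩
    · exact Or.inl hc
    · refine Or.inr ⟨?_, hc⟩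
      have := hhom.aeval ψ (fun i => lin_isHomogeneous _)
      rwa [one_mul] at this
  -- recover f
  have hrec : bind₁ φ (bind₁ ψ f) = f := by
    rw [bind₁_bind₁]
    have h7 : (fun i => bind₁ φ (ψ i)) = X := by
      funext i
      rw [hψ, hφ, bind₁_lin, Matrix.nonsing_inv_mul T hdetT, lin_one]
    rw [h7, bind₁_X_left]
    rfl
  rw [hftil, map_zero] at hrec
  exact hf hrec.symm
end

section
/- Let K be a field, H ∈ K[x₁,…,xₙ]^m quadratic homogeneous, and suppose M := J H is written (after composing with invertible linear maps) in block form M = [[A, B],[C, D]] with A of size r×r, where r = rk M equals the rank of M over K(x) and the leading principal r×r minor of the coefficient matrix of a linear form L₁ (in the decomposition M = ∑ᵢ M^{(i)} Lᵢ, with M^{(1)} = [[I_r,0],[0,0]]) is the identity. If every (r+1)×(r+1) minor of M vanishes, then D = 0 and C·B = 0. -/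
open MvPolynomial Matrix

private lemma degree_one_single {σ : Type*} {d : σ →₀ ℕ} (hd : d.degree = 1) :
    ∃ s, d = Finsupp.single s 1 := by
  classical
  have hne : d.support.Nonempty := by
    by_contra h
    rw [Finset.not_nonempty_iff_eq_empty] at h
    simp [Finsupp.degree_apply, h] at hd
  obtain ⟨s, hs⟩ := hne
  refine ⟨s, ?_⟩
  have hds : d s = 1 := by
    have h1 : 1 ≤ d s := Nat.one_le_iff_ne_zero.2 (Finsupp.mem_support_iff.1 hs)
    have h2 : d s ≤ 1 := by
      rw [← hd]
      exact Finset.single_le_sum (f := fun i => d i) (fun _ _ => Nat.zero_le _) hs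
    omega
  ext t
  rcases eq_or_ne t s with rfl | hts
  · simp [hds]
  · rw [Finsupp.single_apply, if_neg (Ne.symm hts)]
    by_contra h
    have hts' : t ∈ d.support := Finsupp.mem_support_iff.2 h
    have hsub : ({s, t} : Finset σ) ⊆ d.support := by
      intro x hx
      rcases Finset.mem_insert.1 hx with rfl | hx
      · exact hs
      · rw [Finset.mem_singleton.1 hx]; exact hts'
    have : d s + d t ≤ d.degree := by
      rw [Finsupp.degree, ← Finset.sum_pair (Ne.symm hts)]
      exact Finset.sum_le_sum_of_subset hsub
    omega

private lemma homog_one_expand {K : Type*} [CommSemiring K] {n : ℕ}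
    (p : MvPolynomial (Fin n) K) (hp : p.IsHomogeneous 1) :
    p = ∑ s, C (coeff (Finsupp.single s 1) p) * X s := by
  classical
  apply MvPolynomial.ext
  intro d
  rw [coeff_sum]
  simp only [coeff_C_mul, coeff_X']
  by_cases h : ∃ s : Fin n, (Finsupp.single s 1 : Fin n →₀ ℕ) = d
  · obtain ⟨s, rfl⟩ := h
    rw [Finset.sum_eq_single s]
    · simp
    · intro b _ hb
      rw [if_neg, mul_zero]
      intro hbs
      exact hb (Finsupp.single_left_injective one_ne_zero hbs)
    · intro hs; exact absurd (Finset.mem_univ s) hs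
  · push_neg at h
    rw [hp.coeff_eq_zero, Finset.sum_eq_zero]
    · intro s _
      rw [if_neg (h s), mul_zero]
    · intro hdeg
      obtain ⟨s, rfl⟩ := degree_one_single hdeg
      exact h s rfl

private lemma det_two_rows {R : Type*} [CommRing R] {N : ℕ}
    (P : Matrix (Fin N) (Fin N) R) (a c : Fin N) (hac : a ≠ c)
    (h : ∀ b b', b ≠ a → b ≠ c → P b b' = if b = b' then 1 else 0) :
    P.det = P a a * P c c - P a c * P c a := by
  classical
  rw [Matrix.det_apply]
  have hswap : (1 : Equiv.Perm (Fin N)) ≠ Equiv.swap a c := by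
    intro he
    have := congrArg (fun σ => σ a) he
    simp [Equiv.swap_apply_left] at this
    exact hac this
  have hsub : ({1, Equiv.swap a c} : Finset (Equiv.Perm (Fin N))) ⊆ Finset.univ :=
    Finset.subset_univ _
  rw [← Finset.sum_subset hsub]
  · rw [Finset.sum_pair hswap]
    have hprod1 : ∏ i, P ((1 : Equiv.Perm (Fin N)) i) i = P a a * P c c := by
      rw [← Finset.prod_subset (Finset.subset_univ ({a, c} : Finset (Fin N)))]
      · rw [Finset.prod_pair hac]; simp
      · intro x _ hx
        simp only [Finset.mem_insert, Finset.mem_singleton, not_or] at hx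
        simp [h x x hx.1 hx.2]
    have hprod2 : ∏ i, P (Equiv.swap a c i) i = P c a * P a c := by
      rw [← Finset.prod_subset (Finset.subset_univ ({a, c} : Finset (Fin N)))]
      · rw [Finset.prod_pair hac]
        simp [Equiv.swap_apply_left, Equiv.swap_apply_right]
      · intro x _ hx
        simp only [Finset.mem_insert, Finset.mem_singleton, not_or] at hx
        rw [Equiv.swap_apply_of_ne_of_ne hx.1 hx.2]
        simp [h x x hx.1 hx.2]
    rw [hprod1, hprod2]
    rw [Equiv.Perm.sign_one, Equiv.Perm.sign_swap hac]
    simp [Units.smul_def]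
    ring
  · intro σ _ hσ
    simp only [Finset.mem_insert, Finset.mem_singleton, not_or] at hσ
    have hex : ∃ i, σ i ≠ i ∧ σ i ≠ a ∧ σ i ≠ c := by
      by_contra hcon
      push_neg at hcon
      have key : ∀ i, σ i ≠ i → σ i = a ∨ σ i = c := by
        intro i h1
        by_cases h2 : σ i = a
        · exact Or.inl h2
        · exact Or.inr (hcon i h1 h2)
      by_cases ha : σ a = a
      · apply hσ.1
        apply Equiv.ext
        intro i
        simp only [Equiv.Perm.coe_one, id_eq]
        by_contra hi
        rcases key i hi with he | he
        · have hia : i = a := σ.injective (he.trans ha.symm)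
          exact hi (by rw [hia]; exact ha)
        · by_cases hc : σ c = c
          · have hic : i = c := σ.injective (he.trans hc.symm)
            exact hi (by rw [hic]; exact hc)
          · rcases key c hc with hca | hcc
            · exact hac (σ.injective (hca.trans ha.symm)).symm
            · exact hc hcc
      · have hA : σ a = c := (key a ha).resolve_left ha
        have hc : σ c ≠ c := fun he => hac (σ.injective (hA.trans he.symm))
        have hC : σ c = a := by
          rcases key c hc with he | he
          · exact he
          · exact absurd (σ.injective (he.trans hA.symm)) (Ne.symm hac)
        apply hσ.2
        apply Equiv.ext
        intro i
        rcases eq_or_ne i a with rfl | hia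
        · rw [hA, Equiv.swap_apply_left]
        rcases eq_or_ne i c with rfl | hic
        · rw [hC, Equiv.swap_apply_right]
        rw [Equiv.swap_apply_of_ne_of_ne hia hic]
        by_contra hi
        rcases key i hi with he | he
        · exact hic (σ.injective (he.trans hC.symm))
        · exact hia (σ.injective (he.trans hA.symm))
    obtain ⟨i, hi1, hi2, hi3⟩ := hex
    rw [Finset.prod_eq_zero (Finset.mem_univ i)]
    · simp
    · rw [h (σ i) i hi2 hi3, if_neg hi1]

set_option maxHeartbeats 1000000 in
theorem block_D_zero_CB_zero {K : Type*} [Field K] {m n r : ℕ}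
    (hn : 0 < n) (hrm : r ≤ m) (hrn : r ≤ n)
    (H : Fin m → MvPolynomial (Fin n) K) (hH : ∀ i, (H i).IsHomogeneous 2)
    (M : Matrix (Fin m) (Fin n) (MvPolynomial (Fin n) K))
    (hM : M = Matrix.of fun i j => pderiv j (H i))
    (Lf : Fin n → MvPolynomial (Fin n) K) (hL1 : ∀ t, (Lf t).IsHomogeneous 1)
    (hLind : LinearIndependent K Lf)
    (Mc : Fin n → Matrix (Fin m) (Fin n) K)
    (hdecomp : ∀ i j, M i j = ∑ t, C (Mc t i j) * Lf t)
    (hM1 : ∀ (i : Fin m) (j : Fin n),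
      Mc ⟨0, hn⟩ i j = if (i : ℕ) = (j : ℕ) ∧ (i : ℕ) < r then 1 else 0)
    (hrank : (M.map (algebraMap (MvPolynomial (Fin n) K)
      (FractionRing (MvPolynomial (Fin n) K)))).rank = r)
    (hminor : ∀ (ri : Fin (r + 1) → Fin m) (ci : Fin (r + 1) → Fin n),
      (M.submatrix ri ci).det = 0) :
    (∀ (i : Fin m) (j : Fin n), r ≤ (i : ℕ) → r ≤ (j : ℕ) → M i j = 0) ∧
    (∀ (i : Fin m) (j : Fin n), r ≤ (i : ℕ) → r ≤ (j : ℕ) →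
      ∑ k : Fin r, M i (Fin.castLE hrn k) * M (Fin.castLE hrm k) j = 0) := by
  classical
  set z : Fin n := ⟨0, hn⟩ with hz
  -- coefficient matrix of the linear forms
  set c : Matrix (Fin n) (Fin n) K :=
    Matrix.of (fun t s => MvPolynomial.coeff (Finsupp.single s 1) (Lf t)) with hcdef
  have hLfeq : ∀ t, Lf t = ∑ s, MvPolynomial.C (c t s) * MvPolynomial.X s :=
    fun t => homog_one_expand _ (hL1 t)
  have hcrows : LinearIndependent K (fun t => c t) := by
    rw [Fintype.linearIndependent_iff]
    intro g hg
    refine Fintype.linearIndependent_iff.1 hLind g ?_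
    calc ∑ t, g t • Lf t
        = ∑ s, MvPolynomial.C (∑ t, g t * c t s) * MvPolynomial.X s := by
          simp_rw [hLfeq, Finset.smul_sum, MvPolynomial.smul_eq_C_mul]
          rw [Finset.sum_comm]
          refine Finset.sum_congr rfl fun s _ => ?_
          rw [map_sum, Finset.sum_mul]
          refine Finset.sum_congr rfl fun t _ => ?_
          rw [_root_.map_mul, mul_assoc]
      _ = 0 := by
          apply Finset.sum_eq_zero
          intro s _
          have := congrFun hg s
          simp only [Finset.sum_apply, Pi.smul_apply, smul_eq_mul, Pi.zero_apply] at this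
          rw [this, map_zero, zero_mul]
  have hcu : IsUnit c := Matrix.vecMul_injective_iff_isUnit.1
    (Matrix.vecMul_injective_iff.2 hcrows)
  have hci : c * c⁻¹ = 1 :=
    Matrix.mul_nonsing_inv _ ((Matrix.isUnit_iff_isUnit_det c).1 hcu)
  -- the polynomial specialization
  set v : Fin n → Polynomial (MvPolynomial (Fin n) K) :=
    fun u => if u = z then Polynomial.X else Polynomial.C (MvPolynomial.X u) with hv
  set φ : MvPolynomial (Fin n) K →ₐ[K] Polynomial (MvPolynomial (Fin n) K) :=
    MvPolynomial.aeval (fun s => ∑ u, Polynomial.C (MvPolynomial.C ((c⁻¹) s u)) * v u)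
    with hphi
  have hφC : ∀ a : K, φ (MvPolynomial.C a) = Polynomial.C (MvPolynomial.C a) := by
    intro a
    rw [hphi, MvPolynomial.aeval_C]
    rfl
  have hφL : ∀ t, φ (Lf t) = v t := by
    intro t
    rw [hLfeq t]
    rw [map_sum]
    have step : ∀ s, φ (MvPolynomial.C (c t s) * MvPolynomial.X s)
        = ∑ u, Polynomial.C (MvPolynomial.C (c t s * (c⁻¹) s u)) * v u := by
      intro s
      rw [_root_.map_mul, hφC, hphi, MvPolynomial.aeval_X, Finset.mul_sum]
      refine Finset.sum_congr rfl fun u _ => ?_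
      rw [← mul_assoc, ← Polynomial.C_mul, ← MvPolynomial.C_mul]
    simp_rw [step]
    rw [Finset.sum_comm]
    have inner : ∀ u, ∑ s, Polynomial.C (MvPolynomial.C (c t s * (c⁻¹) s u)) * v u
        = Polynomial.C (MvPolynomial.C ((1 : Matrix (Fin n) (Fin n) K) t u)) * v u := by
      intro u
      rw [← hci, Matrix.mul_apply, ← Finset.sum_mul, ← map_sum, ← map_sum]
    simp_rw [inner, Matrix.one_apply]
    rw [Finset.sum_eq_single t]
    · simp
    · intro u _ hu
      rw [if_neg (Ne.symm hu)]
      simp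
    · intro h; exact absurd (Finset.mem_univ t) h
  -- main computation for fixed i j
  have key : ∀ (i : Fin m) (j : Fin n), r ≤ (i:ℕ) → r ≤ (j:ℕ) →
      (∑ t ∈ Finset.univ.erase z,
        MvPolynomial.C (Mc t i j) * MvPolynomial.X t = 0) ∧
      (r = 0 ∨ ∑ a ∈ Finset.univ.erase (Fin.last r),
        ((∑ t ∈ Finset.univ.erase z, MvPolynomial.C
            (Mc t (if h : (a:ℕ) < r then (⟨(a:ℕ), lt_of_lt_of_le h hrm⟩ : Fin m) else i) j)
            * MvPolynomial.X t) *
         (∑ t ∈ Finset.univ.erase z, MvPolynomial.C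
            (Mc t i (if h : (a:ℕ) < r then (⟨(a:ℕ), lt_of_lt_of_le h hrn⟩ : Fin n) else j))
            * MvPolynomial.X t)) = 0) := by
    intro i j hi hj
    set ri : Fin (r+1) → Fin m :=
      fun a => if h : (a:ℕ) < r then (⟨(a:ℕ), lt_of_lt_of_le h hrm⟩ : Fin m) else i with hri
    set ci : Fin (r+1) → Fin n :=
      fun b => if h : (b:ℕ) < r then (⟨(b:ℕ), lt_of_lt_of_le h hrn⟩ : Fin n) else j with hci
    set N : Matrix (Fin (r+1)) (Fin (r+1)) (MvPolynomial (Fin n) K) :=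
      Matrix.of (fun a b => ∑ t ∈ Finset.univ.erase z,
        MvPolynomial.C (Mc t (ri a) (ci b)) * MvPolynomial.X t) with hN
    have hvri : ∀ a : Fin (r+1), ((ri a : Fin m) : ℕ) = if (a:ℕ) < r then (a:ℕ) else (i:ℕ) := by
      intro a; rw [hri]; by_cases h : (a:ℕ) < r <;> simp [h]
    have hvci : ∀ b : Fin (r+1), ((ci b : Fin n) : ℕ) = if (b:ℕ) < r then (b:ℕ) else (j:ℕ) := by
      intro b; rw [hci]; by_cases h : (b:ℕ) < r <;> simp [h]
    have hMc0 : ∀ a b : Fin (r+1), Mc z (ri a) (ci b) = if a = b ∧ (a:ℕ) < r then 1 else 0 := by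
      intro a b
      rw [hM1, hvri a, hvci b]
      simp only [Fin.ext_iff]
      have ha1 : (a:ℕ) < r + 1 := a.isLt
      have hb1 : (b:ℕ) < r + 1 := b.isLt
      split_ifs <;> first | rfl | omega
    have hril : ri (Fin.last r) = i := by
      rw [hri]; simp
    have hcil : ci (Fin.last r) = j := by
      rw [hci]; simp
    -- the entries of the specialized matrix
    have hφM : ∀ a b, φ (M (ri a) (ci b)) =
        Polynomial.X * Polynomial.C (MvPolynomial.C (Mc z (ri a) (ci b)))
          + Polynomial.C (N a b) := by
      intro a b
      rw [hdecomp, map_sum, ← Finset.add_sum_erase _ _ (Finset.mem_univ z)]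
      congr 1
      · rw [_root_.map_mul, hφC, hφL]
        simp only [hv, if_true, eq_self_iff_true]
        rw [mul_comm]
      · rw [hN]
        simp only [Matrix.of_apply]
        rw [map_sum]
        refine Finset.sum_congr rfl fun t ht => ?_
        rw [_root_.map_mul, hφC, hφL]
        simp only [hv]
        rw [if_neg (Finset.mem_erase.1 ht).1, ← _root_.map_mul]
    -- determinant of the specialized matrix vanishes
    have hdetT : Matrix.det (Matrix.of fun a b => φ (M (ri a) (ci b))) = 0 := by
      have h1 : (Matrix.of fun a b => φ (M (ri a) (ci b)))
          = (φ.toRingHom.mapMatrix (M.submatrix ri ci)) := rfl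
      rw [h1, ← RingHom.map_det, hminor ri ci, map_zero]
    -- expansion over subsets
    set W : Finset (Fin (r+1)) → Matrix (Fin (r+1)) (Fin (r+1)) (MvPolynomial (Fin n) K) :=
      fun s => Matrix.of fun a b =>
        if a ∈ s then MvPolynomial.C (Mc z (ri a) (ci b)) else N a b with hW
    have hexpand : ∑ s : Finset (Fin (r+1)),
        Polynomial.X ^ s.card * Polynomial.C ((W s).det) = 0 := by
      rw [← hdetT]
      have hTrows : (Matrix.of fun a b => φ (M (ri a) (ci b)))
          = (((fun a => (Polynomial.X : Polynomial (MvPolynomial (Fin n) K)) •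
              (fun b => Polynomial.C (MvPolynomial.C (Mc z (ri a) (ci b)))))
            + (fun a b => Polynomial.C (N a b)) :
              Fin (r+1) → Fin (r+1) → Polynomial (MvPolynomial (Fin n) K)) :
              Matrix (Fin (r+1)) (Fin (r+1)) (Polynomial (MvPolynomial (Fin n) K))) := by
        funext a b
        simp only [Pi.add_apply, Pi.smul_apply, smul_eq_mul, Matrix.of_apply]
        exact hφM a b
      rw [hTrows]
      have hdd : ∀ A : Matrix (Fin (r+1)) (Fin (r+1)) (Polynomial (MvPolynomial (Fin n) K)),
          A.det = Matrix.detRowAlternating.toMultilinearMap A := fun _ => rfl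
      refine Eq.trans ?_ (hdd _).symm
      rw [MultilinearMap.map_add_univ]
      refine (Finset.sum_congr rfl fun s _ => ?_).symm
      have hpw : (s.piecewise
            (fun a => (Polynomial.X : Polynomial (MvPolynomial (Fin n) K)) •
              (fun b => Polynomial.C (MvPolynomial.C (Mc z (ri a) (ci b)))))
            (fun a b => Polynomial.C (N a b)))
          = fun a => (if a ∈ s then Polynomial.X else 1 : Polynomial (MvPolynomial (Fin n) K)) •
            (fun b => Polynomial.C (W s a b)) := by
        funext a
        by_cases h : a ∈ s
        · rw [Finset.piecewise_eq_of_mem _ _ _ h, if_pos h]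
          funext b
          simp [hW, h]
        · rw [Finset.piecewise_eq_of_notMem _ _ _ h, if_neg h]
          funext b
          simp [hW, h]
      rw [hpw, MultilinearMap.map_smul_univ]
      have hprod : (∏ a : Fin (r+1), if a ∈ s then (Polynomial.X :
          Polynomial (MvPolynomial (Fin n) K)) else 1) = Polynomial.X ^ s.card := by
        rw [Finset.prod_ite_mem, Finset.univ_inter, Finset.prod_const]
      rw [hprod]
      have hCW : Matrix.detRowAlternating.toMultilinearMap
            (fun a b => Polynomial.C (W s a b))
          = Polynomial.C ((W s).det) := by
        refine Eq.trans (hdd _).symm ?_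
        have : (fun a b => Polynomial.C (W s a b))
            = (Polynomial.C : MvPolynomial (Fin n) K →+* _).mapMatrix (W s) := rfl
        rw [this, ← RingHom.map_det]
      rw [hCW, smul_eq_mul]
    have hcoeff : ∀ k : ℕ,
        ∑ s : Finset (Fin (r+1)), (if s.card = k then (W s).det else 0) = 0 := by
      intro k
      have h2 := congrArg (fun p => Polynomial.coeff p k) hexpand
      simp only [Polynomial.finset_sum_coeff, Polynomial.coeff_zero] at h2
      have h3 : ∀ s : Finset (Fin (r+1)),
          (Polynomial.X ^ s.card * Polynomial.C ((W s).det)).coeff k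
          = if s.card = k then (W s).det else 0 := by
        intro s
        rw [mul_comm, Polynomial.C_mul_X_pow_eq_monomial, Polynomial.coeff_monomial]
      simp only [h3] at h2
      exact h2
    have hWzero : ∀ s, Fin.last r ∈ s → (W s).det = 0 := by
      intro s hs
      apply Matrix.det_eq_zero_of_row_eq_zero (Fin.last r)
      intro b
      simp only [hW, Matrix.of_apply, if_pos hs]
      rw [hMc0]
      rw [if_neg, map_zero]
      rintro ⟨-, h⟩
      simp at h
    set U : Finset (Fin (r+1)) := Finset.univ.erase (Fin.last r) with hU
    have hUcard : U.card = r := by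
      rw [hU, Finset.card_erase_of_mem (Finset.mem_univ _)]
      simp
    have hUW : (W U).det = N (Fin.last r) (Fin.last r) := by
      rw [Matrix.det_of_lowerTriangular]
      · rw [Finset.prod_eq_single (Fin.last r)]
        · simp [hW, hU]
        · intro b _ hb
          have hbU : b ∈ U := Finset.mem_erase.2 ⟨hb, Finset.mem_univ b⟩
          have hblt : (b:ℕ) < r := Fin.val_lt_last hb
          simp only [hW, Matrix.of_apply, if_pos hbU]
          rw [hMc0, if_pos ⟨rfl, hblt⟩, _root_.map_one]
        · intro h; exact absurd (Finset.mem_univ _) h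
      · intro a b hab
        have hab' : a < b := hab
        have halt : (a:ℕ) < r := by
          have hb := b.isLt
          have hvab : (a:ℕ) < (b:ℕ) := hab'
          omega
        have haU : a ∈ U := by
          refine Finset.mem_erase.2 ⟨?_, Finset.mem_univ a⟩
          intro he
          rw [he] at halt
          simp at halt
        simp only [hW, Matrix.of_apply, if_pos haU]
        rw [hMc0, if_neg, map_zero]
        rintro ⟨he, -⟩
        exact absurd he (Fin.ne_of_lt hab')
    have hNll : N (Fin.last r) (Fin.last r) = 0 := by
      have h := hcoeff r
      rw [Finset.sum_eq_single U] at h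
      · rw [if_pos hUcard, hUW] at h
        exact h
      · intro s _ hs
        by_cases hc : s.card = r
        · rw [if_pos hc]
          apply hWzero
          by_contra hls
          apply hs
          apply Finset.eq_of_subset_of_card_le
          · intro x hx
            exact Finset.mem_erase.2 ⟨fun he => hls (he ▸ hx), Finset.mem_univ x⟩
          · rw [hUcard, hc]
        · rw [if_neg hc]
      · intro h'; exact absurd (Finset.mem_univ U) h'
    have hfin : ∀ a, N a (Fin.last r)
        = ∑ t ∈ Finset.univ.erase z, MvPolynomial.C (Mc t (ri a) j) * MvPolynomial.X t := by
      intro a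
      rw [hN]
      simp only [Matrix.of_apply, hcil]
    have hfin2 : ∀ a, N (Fin.last r) a
        = ∑ t ∈ Finset.univ.erase z, MvPolynomial.C (Mc t i (ci a)) * MvPolynomial.X t := by
      intro a
      rw [hN]
      simp only [Matrix.of_apply, hril]
    constructor
    · have hthis : N (Fin.last r) (Fin.last r)
          = ∑ t ∈ Finset.univ.erase z, MvPolynomial.C (Mc t i j) * MvPolynomial.X t := by
        rw [hfin (Fin.last r), hril]
      rw [← hthis]
      exact hNll
    · rcases Nat.eq_zero_or_pos r with hr0 | hr
      · exact Or.inl hr0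
      refine Or.inr ?_
      have h := hcoeff (r - 1)
      set T2 : Finset (Finset (Fin (r+1))) := U.image (fun a => U.erase a) with hT2
      have hsub : ∑ s ∈ T2, (if s.card = r - 1 then (W s).det else 0) = 0 := by
        rw [Finset.sum_subset (Finset.subset_univ T2)]
        · exact h
        · intro x _ hx
          by_cases hc : x.card = r - 1
          · rw [if_pos hc]
            by_cases hlx : Fin.last r ∈ x
            · exact hWzero x hlx
            · exfalso
              apply hx
              have hxU : x ⊆ U := fun y hy =>
                Finset.mem_erase.2 ⟨fun he => hlx (he ▸ hy), Finset.mem_univ y⟩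
              have hcard : (U \ x).card = 1 := by
                rw [Finset.card_sdiff_of_subset hxU, hUcard, hc]
                omega
              obtain ⟨a, ha⟩ := Finset.card_eq_one.1 hcard
              have haU : a ∈ U := by
                have : a ∈ U \ x := ha ▸ Finset.mem_singleton_self a
                exact (Finset.mem_sdiff.1 this).1
              refine Finset.mem_image.2 ⟨a, haU, ?_⟩
              rw [Finset.erase_eq, ← ha, Finset.sdiff_sdiff_eq_self hxU]
          · rw [if_neg hc]
      have hinj : ∀ a ∈ U, ∀ b ∈ U, U.erase a = U.erase b → a = b := by
        intro a ha b hb he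
        by_contra hne
        have hmem : a ∈ U.erase b := Finset.mem_erase.2 ⟨hne, ha⟩
        rw [← he] at hmem
        exact (Finset.mem_erase.1 hmem).1 rfl
      rw [Finset.sum_image hinj] at hsub
      have hterm : ∀ a ∈ U, (if (U.erase a).card = r - 1 then (W (U.erase a)).det else 0)
          = -(N a (Fin.last r) * N (Fin.last r) a) := by
        intro a ha
        have hal : a ≠ Fin.last r := (Finset.mem_erase.1 ha).1
        have hcard : (U.erase a).card = r - 1 := by
          rw [Finset.card_erase_of_mem ha, hUcard]
        have hside : ∀ b b', b ≠ a → b ≠ Fin.last r →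
            W (U.erase a) b b' = if b = b' then 1 else 0 := by
          intro b b' hba hbl
          have hbU : b ∈ U.erase a :=
            Finset.mem_erase.2 ⟨hba, Finset.mem_erase.2 ⟨hbl, Finset.mem_univ b⟩⟩
          simp only [hW, Matrix.of_apply, if_pos hbU]
          rw [hMc0]
          have hblt : (b:ℕ) < r := Fin.val_lt_last hbl
          by_cases hbb : b = b'
          · rw [if_pos ⟨hbb, hblt⟩, if_pos hbb, _root_.map_one]
          · rw [if_neg (fun hcon => hbb hcon.1), if_neg hbb, map_zero]
        have hdet := det_two_rows (W (U.erase a)) a (Fin.last r) hal hside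
        have hWa : ∀ y, W (U.erase a) a y = N a y := by
          intro y
          simp only [hW, Matrix.of_apply]
          rw [if_neg (Finset.notMem_erase a U)]
        have hWl : ∀ y, W (U.erase a) (Fin.last r) y = N (Fin.last r) y := by
          intro y
          simp only [hW, Matrix.of_apply]
          rw [if_neg]
          intro hcon
          exact (Finset.mem_erase.1 (Finset.mem_of_mem_erase hcon)).1 rfl
        simp only [hWa, hWl] at hdet
        rw [if_pos hcard, hdet, hNll]
        ring
      have hzero2 : ∑ a ∈ U, N a (Fin.last r) * N (Fin.last r) a = 0 := by
        have hneg : ∑ a ∈ U, -(N a (Fin.last r) * N (Fin.last r) a) = 0 := by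
          calc ∑ a ∈ U, -(N a (Fin.last r) * N (Fin.last r) a)
              = ∑ a ∈ U, (if (U.erase a).card = r - 1 then (W (U.erase a)).det else 0) :=
                Finset.sum_congr rfl fun a ha => (hterm a ha).symm
            _ = 0 := hsub
        rwa [Finset.sum_neg_distrib, neg_eq_zero] at hneg
      refine Eq.trans ?_ hzero2
      refine Finset.sum_congr rfl fun a ha => ?_
      rw [hfin a, hfin2 a]
  constructor
  · intro i j hi hj
    obtain ⟨h1, -⟩ := key i j hi hj
    rw [hdecomp, ← Finset.add_sum_erase _ _ (Finset.mem_univ z)]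
    have hz0 : Mc z i j = 0 := by
      rw [hM1, if_neg]
      rintro ⟨-, h⟩
      omega
    rw [hz0, map_zero, zero_mul, zero_add]
    have h2 := congrArg (MvPolynomial.aeval Lf) h1
    simp only [map_sum, _root_.map_mul, MvPolynomial.aeval_C, MvPolynomial.algebraMap_eq,
      MvPolynomial.aeval_X, map_zero] at h2
    exact h2
  · intro i j hi hj
    obtain ⟨-, h2⟩ := key i j hi hj
    rcases h2 with hr0 | h2
    · subst hr0
      simp
    have h3 := congrArg (MvPolynomial.aeval Lf) h2
    simp only [map_sum, _root_.map_mul, MvPolynomial.aeval_C, MvPolynomial.algebraMap_eq,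
      MvPolynomial.aeval_X, map_zero] at h3
    have hre : ∀ F : Fin (r+1) → MvPolynomial (Fin n) K,
        ∑ a ∈ Finset.univ.erase (Fin.last r), F a = ∑ k : Fin r, F (Fin.castSucc k) := by
      intro F
      have ha := Finset.add_sum_erase Finset.univ F (Finset.mem_univ (Fin.last r))
      have hb := Fin.sum_univ_castSucc F
      exact add_left_cancel ((ha.trans hb).trans (add_comm _ _))
    simp only [hre] at h3
    have hMA : ∀ k : Fin r, ∑ t ∈ Finset.univ.erase z,
        MvPolynomial.C (Mc t (Fin.castLE hrm k) j) * Lf t = M (Fin.castLE hrm k) j := by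
      intro k
      rw [hdecomp, ← Finset.add_sum_erase _ _ (Finset.mem_univ z)]
      have hz0 : Mc z (Fin.castLE hrm k) j = 0 := by
        rw [hM1, if_neg]
        rintro ⟨hh, hlt⟩
        simp only [Fin.coe_castLE] at hh hlt
        omega
      rw [hz0, map_zero, zero_mul, zero_add]
    have hMB : ∀ k : Fin r, ∑ t ∈ Finset.univ.erase z,
        MvPolynomial.C (Mc t i (Fin.castLE hrn k)) * Lf t = M i (Fin.castLE hrn k) := by
      intro k
      rw [hdecomp, ← Finset.add_sum_erase _ _ (Finset.mem_univ z)]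
      have hz0 : Mc z i (Fin.castLE hrn k) = 0 := by
        rw [hM1, if_neg]
        rintro ⟨-, hlt⟩
        omega
      rw [hz0, map_zero, zero_mul, zero_add]
    refine Eq.trans ?_ h3
    refine Finset.sum_congr rfl fun k _ => ?_
    have hlt : ((Fin.castSucc k : Fin (r+1)) : ℕ) < r := by
      simpa using k.isLt
    rw [dif_pos hlt, dif_pos hlt]
    have hc1 : (⟨((Fin.castSucc k : Fin (r+1)):ℕ), lt_of_lt_of_le hlt hrm⟩ : Fin m)
        = Fin.castLE hrm k := by
      apply Fin.ext
      simp
    have hc2 : (⟨((Fin.castSucc k : Fin (r+1)):ℕ), lt_of_lt_of_le hlt hrn⟩ : Fin n)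
        = Fin.castLE hrn k := by
      apply Fin.ext
      simp
    rw [hc1, hc2, hMA, hMB, mul_comm]
end

section
/- Let M be a nonzero m×n matrix whose entries are linear forms in K[x₁,…,xₙ], and suppose r := rk M (rank over K(x)) does not exceed the cardinality of K. Then there exist invertible matrices S ∈ GL_m(K) and T ∈ GL_n(K) such that S M T = ∑ᵢ M̃^{(i)} Lᵢ, where each M̃^{(i)} is a constant matrix over K, L₁,…,Lₙ are linearly independent linear forms, and M̃^{(1)} is the block matrix with I_r in the upper-left corner and zeros elsewhere. -/
open MvPolynomial Matrix

open Module

lemma aux_eq_single_of_degree_one {n : ℕ} {d : Fin n →₀ ℕ} (hd : d.degree = 1) :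
    ∃ t, d = Finsupp.single t 1 := by
  have h0 : d ≠ 0 := by
    rintro rfl; simp [map_zero] at hd
  obtain ⟨t, ht⟩ := Finsupp.support_nonempty_iff.mpr h0
  refine ⟨t, ?_⟩
  ext s
  rcases eq_or_ne s t with rfl | hs
  · simp only [Finsupp.single_eq_same]
    have h1 : d s ≤ 1 := hd ▸ Finset.single_le_sum (fun _ _ => Nat.zero_le _) ht
    have h2 : 1 ≤ d s := Nat.one_le_iff_ne_zero.mpr (Finsupp.mem_support_iff.mp ht)
    omega
  · rw [Finsupp.single_eq_of_ne' (Ne.symm hs)]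
    by_contra hds
    have hsm : s ∈ d.support := Finsupp.mem_support_iff.mpr hds
    have h1 : d.degree = d t + ∑ i ∈ d.support.erase t, d i :=
      (Finset.add_sum_erase _ _ ht).symm
    have h2 : d s ≤ ∑ i ∈ d.support.erase t, d i :=
      Finset.single_le_sum (fun _ _ => Nat.zero_le _) (Finset.mem_erase.mpr ⟨hs, hsm⟩)
    have h3 : 1 ≤ d t := Nat.one_le_iff_ne_zero.mpr (Finsupp.mem_support_iff.mp ht)
    have h4 : 1 ≤ d s := Nat.one_le_iff_ne_zero.mpr hds
    omega

lemma aux_hom1_eq {K : Type*} [CommSemiring K] {n : ℕ} {p : MvPolynomial (Fin n) K}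
    (hp : p.IsHomogeneous 1) :
    p = ∑ s : Fin n, C (coeff (Finsupp.single s 1) p) * X s := by
  apply MvPolynomial.ext
  intro d
  rw [MvPolynomial.coeff_sum]
  simp only [coeff_C_mul, coeff_X', mul_ite, mul_one, mul_zero]
  by_cases hd1 : ∃ t, d = Finsupp.single t 1
  · obtain ⟨t, rfl⟩ := hd1
    rw [Finset.sum_eq_single t]
    · simp
    · intro b _ hb
      rw [if_neg]
      exact fun h => hb ((Finsupp.single_left_inj one_ne_zero).mp h)
    · simp
  · rw [hp.coeff_eq_zero (fun h => hd1 (aux_eq_single_of_degree_one h))]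
    rw [Finset.sum_eq_zero]
    intro s _
    rw [if_neg]
    exact fun h => hd1 ⟨s, h.symm⟩

lemma aux_rank_le_of_submatrix {F : Type*} [Field F] {m n : Type*} [Fintype m] [Fintype n]
    [DecidableEq m] [DecidableEq n] {s : ℕ} (A : Matrix m n F) (f : Fin s → m) (g : Fin s → n)
    (h : (A.submatrix f g).det ≠ 0) : s ≤ A.rank := by
  have hu : IsUnit (A.submatrix f g) :=
    (Matrix.isUnit_iff_isUnit_det _).mpr (isUnit_iff_ne_zero.mpr h)
  have h1 : (A.submatrix f g).rank = s := by
    rw [Matrix.rank_of_isUnit _ hu, Fintype.card_fin]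
  have heq : A.submatrix f g =
      ((1 : Matrix m m F).submatrix f id) * A * ((1 : Matrix n n F).submatrix id g) := by
    have e1 : (((1 : Matrix m m F) * A) * (1 : Matrix n n F)).submatrix f g
        = ((1 : Matrix m m F) * A).submatrix f id * (1 : Matrix n n F).submatrix id g :=
      Matrix.submatrix_mul _ _ _ _ _ Function.bijective_id
    have e2 : ((1 : Matrix m m F) * A).submatrix f id
        = (1 : Matrix m m F).submatrix f id * A.submatrix id id :=
      Matrix.submatrix_mul _ _ _ _ _ Function.bijective_id
    rw [e2, Matrix.submatrix_id_id] at e1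
    simpa using e1
  calc s = (A.submatrix f g).rank := h1.symm
    _ = ((1 : Matrix m m F).submatrix f id * A * (1 : Matrix n n F).submatrix id g).rank := by
        rw [← heq]
    _ ≤ ((1 : Matrix m m F).submatrix f id * A).rank := Matrix.rank_mul_le_left _ _
    _ ≤ A.rank := Matrix.rank_mul_le_right _ _

lemma aux_exists_indep_cols {F : Type*} [Field F] {m n : Type*} [Fintype m] [Fintype n]
    {s : ℕ} (A : Matrix m n F) (h : s ≤ A.rank) :
    ∃ g : Fin s → n, LinearIndependent F (fun j (i : m) => A i (g j)) := by
  classical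
  obtain ⟨b, hbsub, hbspan, hbind⟩ := exists_linearIndependent F (Set.range Aᵀ)
  haveI : Fintype b := ((Set.finite_range Aᵀ).subset hbsub).fintype
  have hcard : s ≤ Fintype.card b := by
    have h1 : A.rank = Module.finrank F (Submodule.span F b) := by
      rw [Matrix.rank_eq_finrank_span_cols, hbspan]
      rfl
    rw [finrank_span_set_eq_card hbind] at h1
    calc s ≤ A.rank := h
      _ = b.toFinset.card := h1
      _ = Fintype.card b := Set.toFinset_card b
  let e : Fin s → b := (Fintype.equivFin b).symm ∘ Fin.castLE hcard
  have he : Function.Injective e :=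
    (Fintype.equivFin b).symm.injective.comp (Fin.castLE_injective hcard)
  have hsel : ∀ i : Fin s, ∃ j : n, Aᵀ j = (e i : m → F) := fun i => hbsub (e i).2
  choose g hg using hsel
  refine ⟨g, ?_⟩
  have : (fun j (i : m) => A i (g j)) = (fun x : b => (x : m → F)) ∘ e := by
    funext j
    exact hg j
  rw [this]
  exact hbind.comp e he

lemma aux_exists_submatrix_det_ne_zero {F : Type*} [Field F] {m n : Type*} [Fintype m] [Fintype n]
    [DecidableEq m] [DecidableEq n] {s : ℕ} (A : Matrix m n F) (h : s ≤ A.rank) :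
    ∃ (f : Fin s → m) (g : Fin s → n), (A.submatrix f g).det ≠ 0 := by
  classical
  obtain ⟨g, hg⟩ := aux_exists_indep_cols A h
  set B : Matrix m (Fin s) F := A.submatrix id g with hB
  have hBrank : B.rank = s := by
    rw [Matrix.rank_eq_finrank_span_cols]
    have : B.col = fun j (i : m) => A i (g j) := rfl
    rw [this, finrank_span_eq_card hg, Fintype.card_fin]
  have hBt : s ≤ Bᵀ.rank := by rw [Matrix.rank_transpose, hBrank]
  obtain ⟨f, hf⟩ := aux_exists_indep_cols Bᵀ hBt
  have hrows : LinearIndependent F (fun j => (A.submatrix f g) j) := by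
    have : (fun j => (A.submatrix f g) j) = (fun j (i : Fin s) => Bᵀ i (f j)) := by
      funext j i
      rfl
    rw [this]
    exact hf
  have hu : IsUnit (A.submatrix f g) := Matrix.linearIndependent_rows_iff_isUnit.mp hrows
  refine ⟨f, g, ?_⟩
  exact ((Matrix.isUnit_iff_isUnit_det _).mp hu).ne_zero

lemma aux_exists_basis_sum' {K V : Type*} [Field K] [AddCommGroup V] [Module K V]
    [FiniteDimensional K V] {a c : ℕ} (h : Module.finrank K V = a + c)
    (w : Fin a → V) (hw : LinearIndependent K w) :
    ∃ b : Basis (Fin a ⊕ Fin c) K V, ∀ i, b (Sum.inl i) = w i := by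
  set U := Submodule.span K (Set.range w) with hU
  obtain ⟨U', hU'⟩ := U.exists_isCompl
  have hUa : Module.finrank K U = a := by
    rw [finrank_span_eq_card hw, Fintype.card_fin]
  have hU'c : Module.finrank K U' = c := by
    have := Submodule.finrank_add_eq_of_isCompl hU'
    omega
  let bU : Basis (Fin a) K U := Basis.span hw
  let bU' : Basis (Fin c) K U' := Module.finBasisOfFinrankEq K U' hU'c
  refine ⟨(bU.prod bU').map (Submodule.prodEquivOfIsCompl U U' hU'), fun i => ?_⟩
  simp only [Basis.map_apply, Basis.prod_apply, Sum.elim_inl, Function.comp]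
  rw [Submodule.coe_prodEquivOfIsCompl']
  simp only [LinearMap.inl_apply, ZeroMemClass.coe_zero, add_zero]
  exact congrArg Subtype.val (Module.Basis.span_apply hw i)

lemma aux_rank_normal_form {K : Type*} [Field K] {m n r : ℕ} (A : Matrix (Fin m) (Fin n) K)
    (hA : A.rank = r) :
    ∃ (S : Matrix (Fin m) (Fin m) K) (T : Matrix (Fin n) (Fin n) K), IsUnit S ∧ IsUnit T ∧
      ∀ i j, (S * A * T) i j = if (i : ℕ) = (j : ℕ) ∧ (i : ℕ) < r then 1 else 0 := by
  classical
  have hrm : r ≤ m := hA ▸ (A.rank_le_card_height.trans (Fintype.card_fin m).le)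
  have hrn : r ≤ n := hA ▸ (A.rank_le_card_width.trans (Fintype.card_fin n).le)
  set f := A.mulVecLin with hf
  have hrange : Module.finrank K (LinearMap.range f) = r := hA
  have hker : Module.finrank K (LinearMap.ker f) = n - r := by
    have h1 := LinearMap.finrank_range_add_finrank_ker f
    rw [hrange] at h1
    have h2 : Module.finrank K (Fin n → K) = n := by simp
    omega
  let bκ : Basis (Fin (n - r)) K (LinearMap.ker f) := Module.finBasisOfFinrankEq K _ hker
  let w : Fin (n - r) → (Fin n → K) := fun k => (bκ k : Fin n → K)
  have hw : LinearIndependent K w :=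
    bκ.linearIndependent.map' (LinearMap.ker f).subtype (Submodule.ker_subtype _)
  have hpi : Module.finrank K (Fin n → K) = (n - r) + r := by
    simp only [Module.finrank_pi, Fintype.card_fin]; omega
  obtain ⟨b, hb⟩ := aux_exists_basis_sum' hpi w hw
  have hbker : ∀ k, f (b (Sum.inl k)) = 0 := fun k => by
    rw [hb k]; exact (bκ k).2
  have hspanw : Submodule.span K (Set.range w) = LinearMap.ker f := by
    have h3 : Set.range w = (LinearMap.ker f).subtype '' Set.range bκ := by
      rw [← Set.range_comp]; rfl
    rw [h3, ← Submodule.map_span, bκ.span_eq, Submodule.map_top, Submodule.range_subtype]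
  let c : Fin r → (Fin m → K) := fun j => f (b (Sum.inr j))
  have hc : LinearIndependent K c := by
    rw [Fintype.linearIndependent_iff]
    intro a ha
    set x := ∑ j, a j • b (Sum.inr j) with hxdef
    have hx : f x = 0 := by
      rw [hxdef, map_sum]
      simpa [_root_.map_smul] using ha
    have hx1 : x ∈ Submodule.span K (b '' Set.range Sum.inl) := by
      have h4 : x ∈ LinearMap.ker f := hx
      rw [← hspanw] at h4
      have himg : Set.range w = b '' Set.range Sum.inl := by
        rw [← Set.range_comp]
        exact congrArg Set.range (funext fun k => (hb k).symm)
      rwa [himg] at h4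
    have hx2 : x ∈ Submodule.span K (b '' Set.range Sum.inr) := by
      rw [hxdef]
      refine Submodule.sum_mem _ fun j _ => Submodule.smul_mem _ _ ?_
      exact Submodule.subset_span ⟨Sum.inr j, ⟨j, rfl⟩, rfl⟩
    have hdisj := b.linearIndependent.disjoint_span_image
      (s := Set.range Sum.inl) (t := Set.range Sum.inr)
      Set.isCompl_range_inl_range_inr.disjoint
    have hx0 : x = 0 := by
      have := hdisj.le_bot ⟨hx1, hx2⟩
      simpa using this
    have hind := (b.linearIndependent.comp Sum.inr Sum.inr_injective)
    exact Fintype.linearIndependent_iff.mp hind a hx0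
  have hpim : Module.finrank K (Fin m → K) = r + (m - r) := by
    simp only [Module.finrank_pi, Fintype.card_fin]; omega
  obtain ⟨bc, hbc⟩ := aux_exists_basis_sum' hpim c hc
  let eN : (Fin (n - r) ⊕ Fin r) ≃ Fin n :=
    (Equiv.sumComm _ _).trans (finSumFinEquiv.trans (finCongr (by omega)))
  let dB := b.reindex eN
  let eM : (Fin r ⊕ Fin (m - r)) ≃ Fin m := finSumFinEquiv.trans (finCongr (by omega))
  let cB := bc.reindex eM
  let stdn := Pi.basisFun K (Fin n)
  let stdm := Pi.basisFun K (Fin m)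
  have hA' : LinearMap.toMatrix stdn stdm f = A := by
    ext i j
    rw [LinearMap.toMatrix_apply]
    simp [stdn, stdm, hf, Matrix.mulVecLin_apply, Matrix.mulVec_single]
  have hST : cB.toMatrix stdm * A * stdn.toMatrix dB = LinearMap.toMatrix dB cB f := by
    rw [← hA']
    exact basis_toMatrix_mul_linearMap_toMatrix_mul_basis_toMatrix dB stdn cB stdm f
  refine ⟨cB.toMatrix stdm, stdn.toMatrix dB, ?_, ?_, ?_⟩
  · letI := cB.invertibleToMatrix stdm
    exact isUnit_of_invertible _
  · letI := stdn.invertibleToMatrix dB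
    exact isUnit_of_invertible _
  intro i j
  rw [hST, LinearMap.toMatrix_apply]
  rcases hsplit : eN.symm j with k | j'
  · have hdBj : dB j = b (Sum.inl k) := by rw [Basis.reindex_apply, hsplit]
    have hjval : (j : ℕ) = r + (k : ℕ) := by
      have hj : j = eN (Sum.inl k) := by rw [← hsplit, Equiv.apply_symm_apply]
      rw [hj]
      simp [eN]
    rw [hdBj, hbker, map_zero]
    simp only [Finsupp.coe_zero, Pi.zero_apply]
    rw [if_neg]
    rintro ⟨h1, h2⟩
    omega
  · have hdBj : dB j = b (Sum.inr j') := by rw [Basis.reindex_apply, hsplit]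
    have hjval : (j : ℕ) = (j' : ℕ) := by
      have hj : j = eN (Sum.inr j') := by rw [← hsplit, Equiv.apply_symm_apply]
      rw [hj]
      simp [eN]
    have hfd : f (dB j) = cB (eM (Sum.inl j')) := by
      rw [hdBj]
      show c j' = _
      rw [← hbc j', Basis.reindex_apply, Equiv.symm_apply_apply]
    have hl : ((eM (Sum.inl j')) : ℕ) = (j' : ℕ) := by simp [eM]
    rw [hfd, Basis.repr_self, Finsupp.single_apply]
    have hiff : (eM (Sum.inl j') = i) ↔ ((i : ℕ) = (j : ℕ) ∧ (i : ℕ) < r) := by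
      constructor
      · rintro rfl
        refine ⟨by rw [hl, hjval], ?_⟩
        rw [hl]; exact j'.2
      · rintro ⟨h1, _⟩
        apply Fin.ext
        rw [hl]; omega
    rw [if_congr hiff rfl rfl]

-- determinant of a matrix of linear forms is homogeneous
lemma aux_det_isHomogeneous {K : Type*} [CommRing K] {n s : ℕ}
    (N : Matrix (Fin s) (Fin s) (MvPolynomial (Fin n) K))
    (hN : ∀ i j, (N i j).IsHomogeneous 1) : N.det.IsHomogeneous s := by
  rw [Matrix.det_apply]
  rw [← mem_homogeneousSubmodule]
  refine Submodule.sum_mem _ fun σ _ => ?_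
  refine zsmul_mem ?_ _
  rw [mem_homogeneousSubmodule]
  have := MvPolynomial.IsHomogeneous.prod Finset.univ (fun i => N (σ i) i) (fun _ => 1)
    (fun i _ => hN (σ i) i)
  simpa using this

lemma aux_det_map {R L : Type*} [CommRing R] [CommRing L] (ψ : R →+* L) {m n s : ℕ}
    (M : Matrix (Fin m) (Fin n) R) (f : Fin s → Fin m) (g : Fin s → Fin n) :
    ((M.map ψ).submatrix f g).det = ψ ((M.submatrix f g).det) := by
  rw [Matrix.submatrix_map, RingHom.map_det, RingHom.mapMatrix_apply]

theorem linear_matrix_normal_form {K : Type*} [Field K] {m n : ℕ} (hn : 0 < n)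
    (M : Matrix (Fin m) (Fin n) (MvPolynomial (Fin n) K)) (hM0 : M ≠ 0)
    (hlin : ∀ i j, (M i j).IsHomogeneous 1)
    (r : ℕ)
    (hr : r = (M.map (algebraMap (MvPolynomial (Fin n) K)
      (FractionRing (MvPolynomial (Fin n) K)))).rank)
    (hcard : (r : Cardinal) ≤ Cardinal.mk K) :
    ∃ (S : Matrix (Fin m) (Fin m) K) (T : Matrix (Fin n) (Fin n) K), IsUnit S ∧ IsUnit T ∧
      ∃ Lf : Fin n → MvPolynomial (Fin n) K,
        (∀ t, (Lf t).IsHomogeneous 1) ∧ LinearIndependent K Lf ∧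
        ∃ Mc : Fin n → Matrix (Fin m) (Fin n) K,
          (∀ (i : Fin m) (j : Fin n),
            ∑ k1 : Fin m, ∑ k2 : Fin n, C (S i k1) * M k1 k2 * C (T k2 j)
              = ∑ t, C (Mc t i j) * Lf t) ∧
          (∀ (i : Fin m) (j : Fin n),
            Mc ⟨0, hn⟩ i j = if (i : ℕ) = (j : ℕ) ∧ (i : ℕ) < r then 1 else 0) := by
  classical
  set φ := algebraMap (MvPolynomial (Fin n) K) (FractionRing (MvPolynomial (Fin n) K))
    with hφdef
  have hφ : Function.Injective φ :=
    IsFractionRing.injective (MvPolynomial (Fin n) K) (FractionRing (MvPolynomial (Fin n) K))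
  obtain ⟨i0, j0, hij0⟩ : ∃ i j, M i j ≠ 0 := by
    by_contra h
    push_neg at h
    exact hM0 (Matrix.ext h)
  have hr1 : 1 ≤ r := by
    rw [hr]
    apply aux_rank_le_of_submatrix (M.map φ) (fun _ : Fin 1 => i0) (fun _ => j0)
    rw [Matrix.det_fin_one]
    simp only [Matrix.submatrix_apply, Matrix.map_apply]
    exact fun h => hij0 (hφ (by rw [h, map_zero]))
  obtain ⟨f, g, hfg⟩ := aux_exists_submatrix_det_ne_zero (M.map φ) (le_of_eq hr)
  have hDne : (M.submatrix f g).det ≠ 0 := by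
    intro h0
    rw [aux_det_map φ M f g, h0, map_zero] at hfg
    exact hfg rfl
  have hDhom : ((M.submatrix f g).det).IsHomogeneous r :=
    aux_det_isHomogeneous _ (fun i j => hlin (f i) (g j))
  obtain ⟨v, hv⟩ : ∃ v : Fin n → K, eval v ((M.submatrix f g).det) ≠ 0 := by
    by_contra h
    push_neg at h
    exact hDne (hDhom.eq_zero_of_forall_eval_eq_zero_of_le_card h hcard)
  set A : Matrix (Fin m) (Fin n) K := M.map (eval v) with hAdef
  have hge : r ≤ A.rank :=
    aux_rank_le_of_submatrix A f g (by rw [aux_det_map (eval v) M f g]; exact hv)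
  have hle : A.rank ≤ r := by
    by_contra hlt
    push_neg at hlt
    obtain ⟨f', g', hfg'⟩ := aux_exists_submatrix_det_ne_zero A (Nat.succ_le_of_lt hlt)
    have h1 : (M.submatrix f' g').det ≠ 0 := by
      intro h0
      rw [aux_det_map (eval v) M f' g', h0, map_zero] at hfg'
      exact hfg' rfl
    have h2 : ((M.map φ).submatrix f' g').det ≠ 0 := by
      rw [aux_det_map φ M f' g']
      exact fun h0 => h1 (hφ (by rw [h0, map_zero]))
    have h3 := aux_rank_le_of_submatrix (M.map φ) f' g' h2
    rw [← hr] at h3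
    omega
  have hArank : A.rank = r := le_antisymm hle hge
  obtain ⟨S, T, hS, hT, hSAT⟩ := aux_rank_normal_form A hArank
  have hv0 : v ≠ 0 := by
    rintro rfl
    apply hv
    rw [eval_zero, constantCoeff_eq]
    exact hDhom.coeff_eq_zero (by rw [map_zero]; omega)
  have hv_li : LinearIndependent K (fun _ : Fin 1 => v) := linearIndependent_unique_iff.mpr hv0
  have hpi1 : Module.finrank K (Fin n → K) = 1 + (n - 1) := by
    simp only [Module.finrank_pi, Fintype.card_fin]; omega
  obtain ⟨b0, hb0⟩ := aux_exists_basis_sum' hpi1 (fun _ : Fin 1 => v) hv_li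
  let eV : (Fin 1 ⊕ Fin (n - 1)) ≃ Fin n := finSumFinEquiv.trans (finCongr (by omega))
  let bV := b0.reindex eV
  have hbV0 : bV ⟨0, hn⟩ = v := by
    have h0 : eV (Sum.inl 0) = ⟨0, hn⟩ := by
      apply Fin.ext
      simp [eV]
    rw [← h0, Basis.reindex_apply, Equiv.symm_apply_apply, hb0]
  let Q : Matrix (Fin n) (Fin n) K := bV.toMatrix (Pi.basisFun K (Fin n))
  let Lf : Fin n → MvPolynomial (Fin n) K := fun t => ∑ s, C (Q t s) * X s
  have hLf_hom : ∀ t, (Lf t).IsHomogeneous 1 := fun t =>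
    MvPolynomial.IsHomogeneous.sum _ _ _ (fun s _ => isHomogeneous_C_mul_X _ _)
  let Φ : (Fin n → K) →ₗ[K] MvPolynomial (Fin n) K :=
    { toFun := fun u => ∑ s, C (u s) * X s
      map_add' := fun x y => by
        simp only [Pi.add_apply, map_add, add_mul, Finset.sum_add_distrib]
      map_smul' := fun a x => by
        simp only [RingHom.id_apply, Finset.smul_sum]
        refine Finset.sum_congr rfl fun s _ => ?_
        rw [MvPolynomial.smul_eq_C_mul, Pi.smul_apply, smul_eq_mul, _root_.map_mul, mul_assoc] }
  have hΦcoeff : ∀ (u : Fin n → K) (s : Fin n), coeff (Finsupp.single s 1) (Φ u) = u s := by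
    intro u s
    show coeff _ (∑ s', C (u s') * X s') = u s
    rw [MvPolynomial.coeff_sum]
    simp only [coeff_C_mul, coeff_X', mul_ite, mul_one, mul_zero]
    rw [Finset.sum_eq_single s]
    · simp
    · intro b _ hb
      rw [if_neg (fun h => hb ((Finsupp.single_left_inj one_ne_zero).mp h))]
    · simp
  have hΦinj : Function.Injective Φ := by
    intro x y hxy
    funext s
    rw [← hΦcoeff x s, ← hΦcoeff y s, hxy]
  have hQunit : IsUnit Q := by
    letI := bV.invertibleToMatrix (Pi.basisFun K (Fin n))
    exact isUnit_of_invertible _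
  have hLf_ind : LinearIndependent K Lf := by
    have hrows : LinearIndependent K (fun t => Q t) :=
      Matrix.linearIndependent_rows_iff_isUnit.mpr hQunit
    have heq : Lf = Φ ∘ (fun t => Q t) := rfl
    rw [heq]
    exact hrows.map' Φ (LinearMap.ker_eq_bot.mpr hΦinj)
  have hLf_eval : ∀ (u : Fin n → K) (t : Fin n), eval u (Lf t) = bV.repr u t := by
    intro u t
    have h1 : eval u (Lf t) = ∑ s, Q t s * u s := by
      simp [Lf, map_sum]
    have h2 : bV.repr u t = ∑ s, u s * Q t s := by
      conv_lhs => rw [← (Pi.basisFun K (Fin n)).sum_repr u]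
      rw [map_sum, Finsupp.coe_finset_sum, Finset.sum_apply]
      refine Finset.sum_congr rfl fun s _ => ?_
      rw [_root_.map_smul, Finsupp.smul_apply, smul_eq_mul, Pi.basisFun_repr]
      rfl
    rw [h1, h2]
    exact Finset.sum_congr rfl (fun s _ => mul_comm _ _)
  have key : ∀ (p : MvPolynomial (Fin n) K), p.IsHomogeneous 1 → ∀ u : Fin n → K,
      eval u p = ∑ t, bV.repr u t * eval (bV t) p := by
    intro p hp u
    have hev : ∀ z : Fin n → K, eval z p = ∑ s, coeff (Finsupp.single s 1) p * z s := by
      intro z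
      conv_lhs => rw [aux_hom1_eq hp]
      simp [map_sum]
    have hu : ∀ s, u s = ∑ t, bV.repr u t * bV t s := by
      intro s
      conv_lhs => rw [← bV.sum_repr u]
      rw [Finset.sum_apply]
      exact Finset.sum_congr rfl (fun t _ => rfl)
    rw [hev]
    calc ∑ s, coeff (Finsupp.single s 1) p * u s
        = ∑ s, ∑ t, coeff (Finsupp.single s 1) p * (bV.repr u t * bV t s) := by
          refine Finset.sum_congr rfl fun s _ => ?_
          rw [hu s, Finset.mul_sum]
      _ = ∑ t, bV.repr u t * eval (bV t) p := by
          rw [Finset.sum_comm]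
          refine Finset.sum_congr rfl fun t _ => ?_
          rw [hev (bV t), Finset.mul_sum]
          exact Finset.sum_congr rfl fun s _ => by ring
  let NP : Fin m → Fin n → MvPolynomial (Fin n) K := fun i j => ∑ k1, ∑ k2, C (S i k1) * M k1 k2 * C (T k2 j)
  have hNPhom : ∀ i j, (NP i j).IsHomogeneous 1 := by
    intro i j
    refine MvPolynomial.IsHomogeneous.sum _ _ _ fun k1 _ =>
      MvPolynomial.IsHomogeneous.sum _ _ _ fun k2 _ => ?_
    have h5 := ((isHomogeneous_C (Fin n) (S i k1)).mul (hlin k1 k2)).mul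
      (isHomogeneous_C (Fin n) (T k2 j))
    simpa using h5
  have hNPevalv : ∀ i j, eval v (NP i j) = (S * A * T) i j := by
    intro i j
    have h6 : (S * A * T) i j = ∑ k2, ∑ k1, S i k1 * A k1 k2 * T k2 j := by
      rw [Matrix.mul_apply]
      refine Finset.sum_congr rfl fun k2 _ => ?_
      rw [Matrix.mul_apply, Finset.sum_mul]
    rw [h6, Finset.sum_comm]
    simp [NP, map_sum, hAdef, Matrix.map_apply]
  let Mc : Fin n → Matrix (Fin m) (Fin n) K := fun t => Matrix.of fun i j => eval (bV t) (NP i j)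
  refine ⟨S, T, hS, hT, Lf, hLf_hom, hLf_ind, Mc, ?_, ?_⟩
  · intro i j
    show NP i j = ∑ t, C (Mc t i j) * Lf t
    have hRhom : (∑ t, C (Mc t i j) * Lf t).IsHomogeneous 1 :=
      MvPolynomial.IsHomogeneous.sum _ _ _ fun t _ => (hLf_hom t).C_mul _
    have hcard1 : ((1 : ℕ) : Cardinal) ≤ Cardinal.mk K :=
      le_trans (Nat.cast_le.mpr hr1) hcard
    apply (hNPhom i j).funext_of_le_card hRhom ?_ hcard1
    intro u
    have h7 : eval u (∑ t, C (Mc t i j) * Lf t) = ∑ t, Mc t i j * bV.repr u t := by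
      rw [map_sum]
      refine Finset.sum_congr rfl fun t _ => ?_
      rw [_root_.map_mul, eval_C, hLf_eval]
    rw [h7, key _ (hNPhom i j) u]
    refine Finset.sum_congr rfl fun t _ => ?_
    rw [mul_comm]
    rfl
  · intro i j
    show eval (bV ⟨0, hn⟩) (NP i j) = _
    rw [hbV0, hNPevalv]
    exact hSAT i j
end

section
/- Let char K ≠ 2, c ∈ K nonzero, and H = (x₁x₃ + c x₂x₄, x₂x₃ − x₁x₄, ½x₃² + (c/2)x₄², ½x₁² + (c/2)x₂²) in four variables. Let M ∈ Mat₄(K) be a constant matrix such that det(J H + M) has degree at most 2 as a polynomial in x₁,…,x₄. Then det(J H + M) = 0. -/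
open MvPolynomial Matrix
set_option maxHeartbeats 4000000

lemma third_pderiv_eq_zero {K : Type*} [CommRing K] (p : MvPolynomial (Fin 4) K)
    (hp : p.totalDegree ≤ 2) (i j k : Fin 4) :
    pderiv i (pderiv j (pderiv k p)) = 0 := by
  conv_lhs => rw [p.as_sum]
  rw [map_sum, map_sum, map_sum]
  apply Finset.sum_eq_zero
  intro v hv
  have hdeg : (v.sum fun _ e => e) ≤ 2 := le_trans (le_totalDegree hv) hp
  rw [Finsupp.sum_fintype _ _ (fun _ => rfl), Fin.sum_univ_four] at hdeg
  simp only [pderiv_monomial, monomial_eq_zero]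
  have hz : v k * ((v - Finsupp.single k 1 : Fin 4 →₀ ℕ) j) *
      ((v - Finsupp.single k 1 - Finsupp.single j 1 : Fin 4 →₀ ℕ) i) = 0 := by
    fin_cases i <;> fin_cases j <;> fin_cases k <;>
      simp only [Finsupp.tsub_apply, Finsupp.single_apply, Nat.mul_eq_zero,
        Fin.mk_zero, Fin.mk_one,
        show (⟨2, by norm_num⟩ : Fin 4) = 2 from rfl,
        show (⟨3, by norm_num⟩ : Fin 4) = 3 from rfl,
        Fin.reduceEq, reduceIte, if_true, if_false] <;> omega
  rcases Nat.mul_eq_zero.mp hz with h | h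
  · rcases Nat.mul_eq_zero.mp h with h' | h'
    · rw [h']; simp
    · rw [h']; simp
  · rw [h]; simp

lemma det_fin_four' {R : Type*} [CommRing R] (A : Matrix (Fin 4) (Fin 4) R) :
    A.det = A 0 0*A 1 1*A 2 2*A 3 3 - A 0 0*A 1 1*A 2 3*A 3 2 - A 0 0*A 1 2*A 2 1*A 3 3 + A 0 0*A 1 2*A 2 3*A 3 1 + A 0 0*A 1 3*A 2 1*A 3 2 - A 0 0*A 1 3*A 2 2*A 3 1 - A 0 1*A 1 0*A 2 2*A 3 3 + A 0 1*A 1 0*A 2 3*A 3 2 + A 0 1*A 1 2*A 2 0*A 3 3 - A 0 1*A 1 2*A 2 3*A 3 0 - A 0 1*A 1 3*A 2 0*A 3 2 + A 0 1*A 1 3*A 2 2*A 3 0 + A 0 2*A 1 0*A 2 1*A 3 3 - A 0 2*A 1 0*A 2 3*A 3 1 - A 0 2*A 1 1*A 2 0*A 3 3 + A 0 2*A 1 1*A 2 3*A 3 0 + A 0 2*A 1 3*A 2 0*A 3 1 - A 0 2*A 1 3*A 2 1*A 3 0 - A 0 3*A 1 0*A 2 1*A 3 2 + A 0 3*A 1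 0*A 2 2*A 3 1 + A 0 3*A 1 1*A 2 0*A 3 2 - A 0 3*A 1 1*A 2 2*A 3 0 - A 0 3*A 1 2*A 2 0*A 3 1 + A 0 3*A 1 2*A 2 1*A 3 0 := by
  simp [Matrix.det_succ_row_zero, Fin.sum_univ_succ,
    show ((2:Fin 3).succ : Fin 4) = 3 from rfl,
    show ((2:Fin 3).castSucc : Fin 4) = 2 from rfl,
    show ((1:Fin 4).succAbove 2 : Fin 4) = 3 from rfl,
    show ((2:Fin 4).succAbove 2 : Fin 4) = 3 from rfl,
    show ((3:Fin 4).succAbove 2 : Fin 4) = 2 from rfl]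
  ring

theorem det_jacobian_add_const_eq_zero {K : Type*} [Field K] (h2 : ringChar K ≠ 2)
    (c : K) (hc : c ≠ 0) (M : Matrix (Fin 4) (Fin 4) K) :
    let H : Fin 4 → MvPolynomial (Fin 4) K :=
      ![X 0 * X 2 + C c * (X 1 * X 3),
        X 1 * X 2 - X 0 * X 3,
        C (2⁻¹ : K) * X 2 ^ 2 + C (c / 2) * X 3 ^ 2,
        C (2⁻¹ : K) * X 0 ^ 2 + C (c / 2) * X 1 ^ 2]
    let N : Matrix (Fin 4) (Fin 4) (MvPolynomial (Fin 4) K) :=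
      (Matrix.of fun i j => pderiv j (H i)) + M.map C
    N.det.totalDegree ≤ 2 → N.det = 0 := by
  intro H N hdeg
  have h2' : (2 : K) ≠ 0 := Ring.two_ne_zero h2
  have hq : ∀ (a : K) (i : Fin 4), pderiv i (C a * X i ^ 2) = C (2 * a) * X i := by
    intro a i
    simp [pderiv_C_mul, pderiv_pow, pderiv_X_self, C_mul, map_ofNat]
    ring
  have hinv : (2 : K) * 2⁻¹ = 1 := mul_inv_cancel₀ h2'
  have hcd : (2 : K) * (c / 2) = c := by field_simp
  have hN : N = Matrix.of
      ![![X 2 + C (M 0 0), C c * X 3 + C (M 0 1), X 0 + C (M 0 2), C c * X 1 + C (M 0 3)],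
        ![-X 3 + C (M 1 0), X 2 + C (M 1 1), X 1 + C (M 1 2), -X 0 + C (M 1 3)],
        ![C (M 2 0), C (M 2 1), X 2 + C (M 2 2), C c * X 3 + C (M 2 3)],
        ![X 0 + C (M 3 0), C c * X 1 + C (M 3 1), C (M 3 2), C (M 3 3)]] := by
    refine Matrix.ext fun i j => ?_
    fin_cases i <;> fin_cases j <;>
      simp [N, H, hq, hinv, hcd, pderiv_mul, pderiv_C_mul, pderiv_X_self, pderiv_X_of_ne]
  have key : ∀ i j k : Fin 4, pderiv i (pderiv j (pderiv k N.det)) = 0 :=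
    fun i j k => third_pderiv_eq_zero N.det hdeg i j k
  have eA := key 0 1 1
  rw [hN] at eA
  have eA' := congrArg constantCoeff eA
  simp [det_fin_four', pderiv_mul, pderiv_X_self, pderiv_X_of_ne,
    map_add, map_sub, _root_.map_mul, map_neg] at eA'
  ring_nf at eA'
  have eB := key 0 0 1
  rw [hN] at eB
  have eB' := congrArg constantCoeff eB
  simp [det_fin_four', pderiv_mul, pderiv_X_self, pderiv_X_of_ne,
    map_add, map_sub, _root_.map_mul, map_neg] at eB'
  ring_nf at eB'
  have eC := key 0 1 2
  rw [hN] at eC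
  have eC' := congrArg constantCoeff eC
  simp [det_fin_four', pderiv_mul, pderiv_X_self, pderiv_X_of_ne,
    map_add, map_sub, _root_.map_mul, map_neg] at eC'
  ring_nf at eC'
  have eD := key 0 0 3
  rw [hN] at eD
  have eD' := congrArg constantCoeff eD
  simp [det_fin_four', pderiv_mul, pderiv_X_self, pderiv_X_of_ne,
    map_add, map_sub, _root_.map_mul, map_neg] at eD'
  ring_nf at eD'
  have eE := key 0 1 3
  rw [hN] at eE
  have eE' := congrArg constantCoeff eE
  simp [det_fin_four', pderiv_mul, pderiv_X_self, pderiv_X_of_ne,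
    map_add, map_sub, _root_.map_mul, map_neg] at eE'
  ring_nf at eE'
  have eF := key 0 0 2
  rw [hN] at eF
  have eF' := congrArg constantCoeff eF
  simp [det_fin_four', pderiv_mul, pderiv_X_self, pderiv_X_of_ne,
    map_add, map_sub, _root_.map_mul, map_neg] at eF'
  ring_nf at eF'
  have eG := key 0 3 3
  rw [hN] at eG
  have eG' := congrArg constantCoeff eG
  simp [det_fin_four', pderiv_mul, pderiv_X_self, pderiv_X_of_ne,
    map_add, map_sub, _root_.map_mul, map_neg] at eG'
  ring_nf at eG'
  have eH := key 1 2 3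
  rw [hN] at eH
  have eH' := congrArg constantCoeff eH
  simp [det_fin_four', pderiv_mul, pderiv_X_self, pderiv_X_of_ne,
    map_add, map_sub, _root_.map_mul, map_neg] at eH'
  ring_nf at eH'
  have eI := key 0 2 3
  rw [hN] at eI
  have eI' := congrArg constantCoeff eI
  simp [det_fin_four', pderiv_mul, pderiv_X_self, pderiv_X_of_ne,
    map_add, map_sub, _root_.map_mul, map_neg] at eI'
  ring_nf at eI'
  have eJ := key 1 3 3
  rw [hN] at eJ
  have eJ' := congrArg constantCoeff eJ
  simp [det_fin_four', pderiv_mul, pderiv_X_self, pderiv_X_of_ne,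
    map_add, map_sub, _root_.map_mul, map_neg] at eJ'
  ring_nf at eJ'
  have eK := key 2 2 3
  rw [hN] at eK
  have eK' := congrArg constantCoeff eK
  simp [det_fin_four', pderiv_mul, pderiv_X_self, pderiv_X_of_ne,
    map_add, map_sub, _root_.map_mul, map_neg] at eK'
  ring_nf at eK'
  have eL := key 2 3 3
  rw [hN] at eL
  have eL' := congrArg constantCoeff eL
  simp [det_fin_four', pderiv_mul, pderiv_X_self, pderiv_X_of_ne,
    map_add, map_sub, _root_.map_mul, map_neg] at eL'
  ring_nf at eL'
  have cancel : ∀ a b : K, a ≠ 0 → a * b = 0 → b = 0 := fun a b ha h => by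
    rcases mul_eq_zero.mp h with h | h
    · exact absurd h ha
    · exact h
  have hcc : (c ^ 2 * 2 : K) ≠ 0 := mul_ne_zero (pow_ne_zero 2 hc) h2'
  have hc2 : (c * 2 : K) ≠ 0 := mul_ne_zero hc h2'
  have hm21 : M 2 1 = 0 := by
    rcases eA' with h | h
    · exact h
    · exact absurd h hc2
  have hm20 : M 2 0 = 0 := by
    rcases eB' with h | h | h
    · exact absurd h hc
    · exact h
    · exact absurd h (by simpa using h2')
  have hm11 : M 1 1 = M 0 0 := by
    have := cancel c (M 0 0 - M 1 1) hc (by linear_combination eC')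
    exact (sub_eq_zero.mp this).symm
  have hm22 : M 2 2 = M 0 0 := by
    have := cancel (c * 2) (M 1 1 - M 2 2) hc2 (by linear_combination eD')
    rw [← hm11]
    exact (sub_eq_zero.mp this).symm
  have hm01 : M 0 1 = -(c * M 1 0) := by
    have := cancel c (M 0 1 + c * M 1 0) hc (by linear_combination -eE')
    linear_combination this
  have hm23 : M 2 3 = -(c * M 1 0) := by
    have := cancel 2 (M 2 3 - M 0 1) h2' (by linear_combination eF')
    rw [← hm01]
    exact sub_eq_zero.mp this
  have hm31 : M 3 1 = c * M 1 2 := by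
    have := cancel (c * 2) (M 3 1 - c * M 1 2) hc2 (by linear_combination eG')
    exact sub_eq_zero.mp this
  have hm03 : M 0 3 = c * M 1 2 := by
    have := cancel c (M 0 3 - c * M 1 2) hc (by linear_combination -eH')
    exact sub_eq_zero.mp this
  have hm13 : M 1 3 = -(M 0 2) := by
    have := cancel c (M 1 3 + M 0 2) hc (by linear_combination eI')
    linear_combination this
  have hm30 : M 3 0 = M 0 2 := by
    have := cancel (c ^ 2 * 2) (M 3 0 - M 0 2) hcc (by linear_combination -eJ')
    exact sub_eq_zero.mp this
  have hm32 : M 3 2 = 0 := by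
    rcases eK' with h | h | h
    · exact h
    · exact absurd h hc
    · exact absurd h h2'
  have hm33 : M 3 3 = 0 := by
    rcases eL' with h | h
    · exact h
    · exact absurd h (by simpa using hc2)
  rw [hN, det_fin_four']
  simp only [Matrix.of_apply, Matrix.cons_val', Matrix.cons_val_zero, Matrix.cons_val_one,
    Matrix.head_cons, Matrix.empty_val', Matrix.cons_val_fin_one, Matrix.head_fin_const,
    Matrix.cons_val_two, Matrix.cons_val_three, Matrix.tail_cons]
  rw [hm21, hm20, hm11, hm22, hm23, hm01, hm31, hm03, hm13, hm30, hm32, hm33]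
  simp only [map_neg, _root_.map_mul, map_zero, C_0]
  ring
end

section
/- Let K be a field and define H ∈ K[x₁,…,x₅]⁵ (n ≥ 5) by requiring J H to equal the matrix with rows (0, x₅, 0, 0, 0), (x₄, 0, −x₅, 0, 0), (0, x₄, 0, 0, 0), (0,0,0,0,0), (0,0,0,0,0), e.g. H = (x₂x₅, x₁x₄ − x₃x₅, x₂x₄, 0, 0). Then J H is nilpotent and rk J H = 3 over K(x), yet J H is not similar over K to a triangular matrix. -/
open MvPolynomial Matrix Module Submodule

set_option maxHeartbeats 1600000 in
theorem nilpotent_rank_three_not_triangularizable {K : Type*} [Field K] :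
    let H : Fin 5 → MvPolynomial (Fin 5) K :=
      ![X 1 * X 4, X 0 * X 3 - X 2 * X 4, X 1 * X 3, 0, 0]
    let M : Matrix (Fin 5) (Fin 5) (MvPolynomial (Fin 5) K) :=
      Matrix.of fun i j => pderiv j (H i)
    IsNilpotent M ∧
    (M.map (algebraMap (MvPolynomial (Fin 5) K)
      (FractionRing (MvPolynomial (Fin 5) K)))).rank = 3 ∧
    ¬ ∃ (T : Matrix (Fin 5) (Fin 5) K)
        (P : Matrix (Fin 5) (Fin 5) (MvPolynomial (Fin 5) K)),
        IsUnit T ∧ P = (T⁻¹.map C) * M * (T.map C) ∧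
        ∀ i j : Fin 5, i < j → P i j = 0 := by
  intro H M
  have hM : M = !![0, X 4, 0, 0, X 1;
                   X 3, 0, -X 4, X 0, -X 2;
                   0, X 3, 0, X 1, 0;
                   0, 0, 0, 0, 0;
                   0, 0, 0, 0, 0] := by
    ext i j : 2
    fin_cases i <;> fin_cases j <;>
      simp [M, H, pderiv_mul, pderiv_X, Pi.single_apply, Matrix.vecHead, Matrix.vecTail]
  refine ⟨?_, ?_, ?_⟩
  · -- nilpotency : M ^ 4 = 0
    refine ⟨4, ?_⟩
    have h4 : M ^ 4 = (M * M) * (M * M) := by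
      rw [pow_succ, pow_succ, pow_succ, pow_one, mul_assoc]
    have h2 : M * M = !![X 3 * X 4, 0, -(X 4 * X 4), X 0 * X 4, -(X 2 * X 4);
                         0, 0, 0, -(X 1 * X 4), X 1 * X 3;
                         X 3 * X 3, 0, -(X 3 * X 4), X 0 * X 3, -(X 2 * X 3);
                         0, 0, 0, 0, 0;
                         0, 0, 0, 0, 0] := by
      rw [hM]
      ext i j : 2
      fin_cases i <;> fin_cases j <;>
        simp [Matrix.mul_apply, Fin.sum_univ_five, Matrix.vecHead, Matrix.vecTail] <;> ring
    rw [h4, h2]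
    ext i j : 2
    fin_cases i <;> fin_cases j <;>
      simp [Matrix.mul_apply, Fin.sum_univ_five, Matrix.vecHead, Matrix.vecTail] <;> ring
  · -- rank = 3
    set F := FractionRing (MvPolynomial (Fin 5) K) with hF
    set φ := algebraMap (MvPolynomial (Fin 5) K) F with hφ
    have hinj : Function.Injective φ := IsFractionRing.injective _ _
    have hy : ∀ i : Fin 5, φ (X i) ≠ 0 := fun i h =>
      X_ne_zero (R := K) i (hinj (by simpa using h))
    have hA : M.map φ = !![0, φ (X 4), 0, 0, φ (X 1);
        φ (X 3), 0, -(φ (X 4)), φ (X 0), -(φ (X 2));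
        0, φ (X 3), 0, φ (X 1), 0;
        0, 0, 0, 0, 0;
        0, 0, 0, 0, 0] := by
      rw [hM]
      ext i j : 2
      fin_cases i <;> fin_cases j <;>
        simp [Matrix.map_apply, Matrix.vecHead, Matrix.vecTail]
    set A := M.map φ with hAdef
    rw [Matrix.rank_eq_finrank_span_cols]
    set b : Fin 3 → (Fin 5 → F) := ![Aᵀ 0, Aᵀ 1, Aᵀ 3] with hb
    have hli : LinearIndependent F b := by
      rw [Fintype.linearIndependent_iff]
      intro g hg
      have h0 := congrFun hg 0
      have h1 := congrFun hg 1
      have h2 := congrFun hg 2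
      simp [hb, Fin.sum_univ_three, hA, Matrix.vecHead, Matrix.vecTail] at h0 h1 h2
      have hg1 : g 1 = 0 := h0.resolve_right (hy 4)
      rw [hg1, zero_mul, zero_add] at h2
      have hg2 : g 2 = 0 := by
        rcases mul_eq_zero.1 h2 with h | h
        · exact h
        · exact absurd h (hy 1)
      rw [hg2, zero_mul, add_zero] at h1
      have hg0 : g 0 = 0 := by
        rcases mul_eq_zero.1 h1 with h | h
        · exact h
        · exact absurd h (hy 3)
      intro i; fin_cases i <;> assumption
    apply le_antisymm
    · set w : Fin 3 → (Fin 5 → F) := ![Pi.single 0 1, Pi.single 1 1, Pi.single 2 1] with hw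
      have hsub : span F (Set.range Aᵀ) ≤ span F (Set.range w) := by
        rw [span_le]
        rintro - ⟨k, rfl⟩
        have hcol : Aᵀ k = A 0 k • w 0 + A 1 k • w 1 + A 2 k • w 2 := by
          funext i
          have h3 : A 3 k = 0 := by
            rw [hA]; fin_cases k <;> simp [Matrix.vecHead, Matrix.vecTail]
          have h4 : A 4 k = 0 := by
            rw [hA]; fin_cases k <;> simp [Matrix.vecHead, Matrix.vecTail]
          fin_cases i <;> simp [hw, Pi.single_apply, Matrix.transpose_apply, h3, h4]
        rw [hcol]
        refine add_mem (add_mem ?_ ?_) ?_ <;>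
          exact smul_mem _ _ (subset_span ⟨_, rfl⟩)
      calc finrank F (span F (Set.range Aᵀ)) ≤ finrank F (span F (Set.range w)) :=
            Submodule.finrank_mono hsub
        _ ≤ Fintype.card (Fin 3) := by
              simpa [Set.finrank] using finrank_range_le_card (R := F) w
        _ = 3 := by simp
    · have hsub : span F (Set.range b) ≤ span F (Set.range Aᵀ) := by
        rw [span_le]
        rintro - ⟨i, rfl⟩
        fin_cases i <;> exact subset_span ⟨_, rfl⟩
      calc (3 : ℕ) = Fintype.card (Fin 3) := by simp
        _ = finrank F (span F (Set.range b)) := (finrank_span_eq_card hli).symm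
        _ ≤ finrank F (span F (Set.range Aᵀ)) := Submodule.finrank_mono hsub
  · -- not triangularizable over K
    rintro ⟨T, P, hT, hP, htri⟩
    have hTdet : IsUnit T.det := (Matrix.isUnit_iff_isUnit_det T).1 hT
    have hkey : (T.map C) * P = M * (T.map C) := by
      rw [hP, ← Matrix.mul_assoc, ← Matrix.mul_assoc, ← Matrix.map_mul,
        Matrix.mul_nonsing_inv T hTdet, Matrix.map_one C (map_zero C) (map_one C),
        Matrix.one_mul]
    set p : MvPolynomial (Fin 5) K := P 4 4 with hp
    have hcol : ∀ i : Fin 5, ∑ j, M i j * C (T j 4) = C (T i 4) * p := by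
      intro i
      have h := congrFun (congrFun hkey i) 4
      have h0 : P 0 4 = 0 := htri 0 4 (by decide)
      have h1 : P 1 4 = 0 := htri 1 4 (by decide)
      have h2 : P 2 4 = 0 := htri 2 4 (by decide)
      have h3 : P 3 4 = 0 := htri 3 4 (by decide)
      simp only [Matrix.mul_apply, Fin.sum_univ_five, Matrix.map_apply,
        h0, h1, h2, h3, mul_zero, zero_add, add_zero] at h
      rw [Fin.sum_univ_five]; exact h.symm
    have eq0 := hcol 0
    have eq1 := hcol 1
    have eq2 := hcol 2
    have eq3 := hcol 3
    have eq4 := hcol 4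
    rw [hM] at eq0 eq1 eq2 eq3 eq4
    simp only [Fin.sum_univ_five] at eq0 eq1 eq2 eq3 eq4
    norm_num [Matrix.vecHead, Matrix.vecTail, Fin.isValue, Matrix.cons_val_zero, Matrix.cons_val_one, Matrix.cons_val_two, Matrix.cons_val_three, Matrix.cons_val_four, Matrix.cons_val_succ] at eq0 eq1 eq2 eq3 eq4
    have hz : ∀ i : Fin 5, T i 4 = 0 := by
      by_cases hp0 : p = 0
      · rw [hp0] at eq0 eq1 eq2
        simp only [mul_zero] at eq0 eq1 eq2
        have hb : T 1 4 = 0 := by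
          have h := congrArg (aeval (Pi.single 4 1 : Fin 5 → K)) eq0
          simpa [Pi.single_apply] using h
        have he : T 4 4 = 0 := by
          have h := congrArg (aeval (Pi.single 1 1 : Fin 5 → K)) eq0
          simpa [Pi.single_apply] using h
        have hd : T 3 4 = 0 := by
          have h := congrArg (aeval (Pi.single 1 1 : Fin 5 → K)) eq2
          simpa [Pi.single_apply] using h
        have ha : T 0 4 = 0 := by
          have h := congrArg (aeval (Pi.single 3 1 : Fin 5 → K)) eq1
          simpa [Pi.single_apply, hd] using h
        have hc : T 2 4 = 0 := by
          have h := congrArg (aeval (Pi.single 4 1 : Fin 5 → K)) eq1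
          simpa [Pi.single_apply, he] using h
        intro i; fin_cases i <;> assumption
      · have hd : T 3 4 = 0 := eq3.resolve_right hp0
        have he : T 4 4 = 0 := eq4.resolve_right hp0
        simp only [hd, he, map_zero, mul_zero, add_zero, neg_zero] at eq0 eq1 eq2
        have hb2 : C (T 1 4) * (p * p) = 0 := by
          linear_combination -p * eq1 - X 3 * eq0 + X 4 * eq2
        have hb : T 1 4 = 0 := by
          rcases mul_eq_zero.1 hb2 with h | h
          · exact C_eq_zero.1 h
          · exact absurd (mul_self_eq_zero.1 h) hp0
        rw [hb] at eq0 eq2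
        simp only [map_zero, mul_zero] at eq0 eq2
        have ha : T 0 4 = 0 := by
          rcases mul_eq_zero.1 eq0.symm with h | h
          · exact C_eq_zero.1 h
          · exact absurd h hp0
        have hc : T 2 4 = 0 := by
          rcases mul_eq_zero.1 eq2.symm with h | h
          · exact C_eq_zero.1 h
          · exact absurd h hp0
        intro i; fin_cases i <;> assumption
    exact hTdet.ne_zero (Matrix.det_eq_zero_of_column_eq_zero 4 hz)
end
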